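/- arXiv:1304.8118 — 4 statements merged into one kernel-verified Lean document; each statement's English description precedes it below -/
import Mathlib

section
/- Let (Ω, F, μ) be a complete finite measure space, Y a separable Banach space, and P : Ω → 2^Y a nonempty-valued, integrably bounded set-valued map with measurable graph. Then the set S¹_P = {x ∈ L¹(μ, Y) : x(ω) ∈ P(ω) μ-a.e.} is nonempty. -/
open MeasureTheory Set Filter Topology
open scoped ENNReal

section AumannSelection

/-- Every set in a product σ-algebra factors through a measurable map to `ℕ → Bool`. -/
theorem exists_factorization {Ω R : Type*} [mΩ : MeasurableSpace Ω] [mR : MeasurableSpace R]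
    (G : Set (Ω × R)) (hG : MeasurableSet G) :
    ∃ (f : Ω → (ℕ → Bool)) (G' : Set ((ℕ → Bool) × R)), Measurable f ∧ MeasurableSet G' ∧
      G = Prod.map f id ⁻¹' G' := by
  classical
  let Fact : Set (Ω × R) → Prop := fun G =>
    ∃ (f : Ω → (ℕ → Bool)) (G' : Set ((ℕ → Bool) × R)), Measurable f ∧ MeasurableSet G' ∧
      G = Prod.map f id ⁻¹' G'
  let m : MeasurableSpace (Ω × R) :=
    { MeasurableSet' := Fact
      measurableSet_empty := ⟨fun _ _ => false, ∅, measurable_const, MeasurableSet.empty, by simp⟩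
      measurableSet_compl := by
        rintro s ⟨f, G', hf, hG', rfl⟩
        exact ⟨f, G'ᶜ, hf, hG'.compl, by rw [preimage_compl]⟩
      measurableSet_iUnion := by
        rintro s hs
        choose f G' hf hG' heq using hs
        set e : ℕ × ℕ ≃ ℕ := Nat.pairEquiv
        set F : Ω → (ℕ → Bool) := fun ω m => f (e.symm m).1 ω (e.symm m).2 with hF
        set π : ℕ → (ℕ → Bool) → (ℕ → Bool) := fun n c k => c (e (n, k)) with hπ
        have hFm : Measurable F :=
          measurable_pi_lambda _ fun m => (measurable_pi_apply _).comp (hf _)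
        have hπm : ∀ n, Measurable (π n) :=
          fun n => measurable_pi_lambda _ fun k => measurable_pi_apply _
        have hπF : ∀ n, π n ∘ F = f n := by
          intro n; funext ω; funext k
          simp only [hπ, hF, Function.comp_apply, e, Equiv.symm_apply_apply]
        refine ⟨F, ⋃ n, Prod.map (π n) id ⁻¹' G' n, hFm,
          MeasurableSet.iUnion fun n => ((hπm n).prodMap measurable_id) (hG' n), ?_⟩
        rw [preimage_iUnion]
        refine iUnion_congr fun n => ?_
        rw [heq n, ← preimage_comp]
        have h2 : (Prod.map (π n) id ∘ Prod.map F id : Ω × R → (ℕ → Bool) × R)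
            = Prod.map (f n) id := by
          funext p
          obtain ⟨a, b⟩ := p
          simp only [Function.comp_apply, Prod.map, id_eq, Prod.mk.injEq, and_true]
          exact congrFun (hπF n) a
        rw [h2] }
  have hle : (Prod.instMeasurableSpace : MeasurableSpace (Ω × R)) ≤ m := by
    rw [show (Prod.instMeasurableSpace : MeasurableSpace (Ω × R)) =
        mΩ.comap Prod.fst ⊔ mR.comap Prod.snd from rfl]
    refine sup_le ?_ ?_
    · rintro s ⟨A, hA, rfl⟩
      refine ⟨fun ω _ => if ω ∈ A then true else false,
        ((fun c : ℕ → Bool => c 0) ⁻¹' {true}) ×ˢ univ,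
        measurable_pi_lambda _ fun _ => Measurable.ite hA measurable_const measurable_const,
        ((measurable_pi_apply 0) (measurableSet_singleton true)).prod MeasurableSet.univ, ?_⟩
      ext p
      by_cases hp : p.1 ∈ A <;> simp [hp]
    · rintro s ⟨B, hB, rfl⟩
      exact ⟨fun _ _ => false, univ ×ˢ B, measurable_const, MeasurableSet.univ.prod hB,
        by ext p; simp⟩
  exact hle G hG

theorem exists_compact_core {X : Type*} [TopologicalSpace X] [T2Space X]
    [FirstCountableTopology X] [MeasurableSpace X] [OpensMeasurableSpace X]
    (ν : Measure X) [IsFiniteMeasure ν] (φ : (ℕ → ℕ) → X) (hφ : Continuous φ)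
    {ε : ℝ≥0∞} (hε : ε ≠ 0) :
    ∃ K : Set (ℕ → ℕ), IsCompact K ∧ ν (range φ) ≤ ν (φ '' K) + ε := by
  classical
  -- the small numbers
  set δ : ℕ → ℝ≥0∞ := fun n => ε * 2⁻¹ ^ (n + 1) with hδ
  have hδ0 : ∀ n, δ n ≠ 0 := fun n => mul_ne_zero hε (pow_ne_zero _ (by simp))
  have hδsum : ∀ n, ∑ i ∈ Finset.range n, δ i ≤ ε := by
    intro n
    calc ∑ i ∈ Finset.range n, δ i ≤ ∑' i, δ i := ENNReal.sum_le_tsum _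
    _ = ε * ∑' i : ℕ, 2⁻¹ ^ (i + 1) := ENNReal.tsum_mul_left
    _ ≤ ε * 1 := by
        gcongr
        have h2 : (∑' i : ℕ, (2⁻¹ : ℝ≥0∞) ^ (i + 1)) = 2⁻¹ * ∑' i : ℕ, 2⁻¹ ^ i := by
          rw [← ENNReal.tsum_mul_left]
          congr 1; funext i; rw [pow_succ, mul_comm]
        rw [h2, ENNReal.tsum_geometric, ENNReal.one_sub_inv_two, inv_inv]
        exact le_of_eq (ENNReal.inv_mul_cancel (by norm_num) (by norm_num))
    _ = ε := mul_one ε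
  -- one-step approximation
  have key : ∀ (S : Set (ℕ → ℕ)) (n : ℕ),
      ∃ m, ν (φ '' S) ≤ ν (φ '' {σ ∈ S | σ n ≤ m}) + δ n := by
    intro S n
    have hmono : Monotone fun m => φ '' {σ ∈ S | σ n ≤ m} := by
      intro a b hab
      exact image_mono fun σ hσ => ⟨hσ.1, hσ.2.trans hab⟩
    have hU : ⋃ m, φ '' {σ ∈ S | σ n ≤ m} = φ '' S := by
      rw [← image_iUnion]
      suffices h : (⋃ m, {σ ∈ S | σ n ≤ m}) = S by rw [h]
      ext σ
      simp only [mem_iUnion, mem_sep_iff]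
      exact ⟨fun ⟨m, hm, _⟩ => hm, fun h => ⟨σ n, h, le_rfl⟩⟩
    have hsup : ν (φ '' S) = ⨆ m, ν (φ '' {σ ∈ S | σ n ≤ m}) := by
      rw [← hU, hmono.measure_iUnion]
    by_cases h0 : ν (φ '' S) = 0
    · exact ⟨0, by rw [h0]; exact zero_le⟩
    have hlt : ν (φ '' S) - δ n < ν (φ '' S) :=
      ENNReal.sub_lt_self (measure_ne_top ν _) h0 (hδ0 n)
    rw [hsup] at hlt
    obtain ⟨m, hm⟩ := lt_iSup_iff.mp hlt
    rw [← hsup] at hm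
    exact ⟨m, tsub_le_iff_right.mp hm.le⟩
  choose M hM using key
  -- the recursive construction
  set E : ℕ → Set (ℕ → ℕ) :=
    fun n => Nat.rec univ (fun k Ek => {σ ∈ Ek | σ k ≤ M Ek k}) n with hE
  have hE0 : E 0 = univ := rfl
  have hEsucc : ∀ n, E (n + 1) = {σ ∈ E n | σ n ≤ M (E n) n} := fun n => rfl
  set τ : ℕ → ℕ := fun n => M (E n) n with hτ
  have hEdesc : ∀ n, E n = {σ | ∀ i < n, σ i ≤ τ i} := by
    intro n
    induction n with
    | zero => rw [hE0]; ext σ; simp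
    | succ n ih =>
      ext σ
      rw [hEsucc n]
      have hmem : σ ∈ E n ↔ ∀ i < n, σ i ≤ τ i := by rw [ih]; exact Iff.rfl
      show (σ ∈ E n ∧ σ n ≤ τ n) ↔ σ ∈ {σ | ∀ i < n + 1, σ i ≤ τ i}
      rw [hmem]
      simp only [mem_setOf_eq]
      constructor
      · rintro ⟨h1, h2⟩ i hi
        rcases Nat.lt_succ_iff_lt_or_eq.mp hi with h | rfl
        exacts [h1 i h, h2]
      · intro h
        exact ⟨fun i hi => h i (by omega), h n (by omega)⟩
  have hbound : ∀ n, ν (range φ) ≤ ν (φ '' E n) + ∑ i ∈ Finset.range n, δ i := by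
    intro n
    induction n with
    | zero => rw [hE0, image_univ]; simp
    | succ n ih =>
      calc ν (range φ) ≤ ν (φ '' E n) + ∑ i ∈ Finset.range n, δ i := ih
      _ ≤ (ν (φ '' E (n + 1)) + δ n) + ∑ i ∈ Finset.range n, δ i := by
          gcongr
          exact hM (E n) n
      _ = ν (φ '' E (n + 1)) + ∑ i ∈ Finset.range (n + 1), δ i := by
          rw [Finset.sum_range_succ]
          ring
  set K : Set (ℕ → ℕ) := ⋂ n, E n with hK
  have hKpi : K = Set.pi univ fun i => Iic (τ i) := by
    ext σ
    simp only [hK, mem_iInter, mem_univ_pi, mem_Iic, hEdesc, mem_setOf_eq]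
    exact ⟨fun h i => h (i + 1) i (by omega), fun h n i _ => h i⟩
  have hKcompact : IsCompact K := by
    rw [hKpi]
    exact isCompact_univ_pi fun i => (finite_Iic (τ i)).isCompact
  refine ⟨K, hKcompact, ?_⟩
  -- the closures
  set D : ℕ → Set X := fun n => closure (φ '' E n) with hD
  have hEanti : Antitone E := by
    refine antitone_nat_of_succ_le fun n => ?_
    rw [hEsucc n]
    exact sep_subset _ _
  have hDanti : Antitone D := fun a b hab =>
    closure_mono (image_mono (hEanti hab))
  -- the key diagonal argument : ⋂ n, D n ⊆ φ '' K
  have hdiag : ⋂ n, D n ⊆ φ '' K := by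
    intro y hy
    obtain ⟨U, hU⟩ := (𝓝 y).exists_antitone_basis
    have hpick : ∀ n, ∃ σ, σ ∈ E n ∧ φ σ ∈ U n := by
      intro n
      have hyn : y ∈ closure (φ '' E n) := mem_iInter.mp hy n
      obtain ⟨z, hz1, hz2⟩ := mem_closure_iff_nhds.mp hyn (U n) (hU.toHasBasis.mem_of_mem trivial)
      obtain ⟨σ, hσ, rfl⟩ := hz2
      exact ⟨σ, hσ, hz1⟩
    choose σ hσE hσU using hpick
    haveI : ∀ i, Finite (Iic (τ i)) := fun i => (finite_Iic (τ i)).to_subtype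
    let ρ : ℕ → ∀ i, Iic (τ i) := fun n i => ⟨min (σ n i) (τ i), mem_Iic.mpr (min_le_right _ _)⟩
    obtain ⟨rlim, -, k, hk, hρ⟩ :=
      IsCompact.tendsto_subseq (isCompact_univ (X := ∀ i, Iic (τ i))) (fun n => mem_univ (ρ n))
    set σlim : ℕ → ℕ := fun i => (rlim i : ℕ) with hσlim
    have hσlimK : σlim ∈ K := by
      rw [hKpi]
      intro i _
      exact (rlim i).2
    have hcoord : ∀ i, ∀ᶠ m in atTop, σ (k m) i = σlim i := by
      intro i
      have h1 : Tendsto (fun m => ρ (k m) i) atTop (𝓝 (rlim i)) :=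
        (tendsto_pi_nhds.mp hρ) i
      have hsing : {rlim i} ∈ 𝓝 (rlim i) := (isOpen_discrete {rlim i}).mem_nhds rfl
      have h2 : ∀ᶠ m in atTop, ρ (k m) i = rlim i := by
        filter_upwards [h1 hsing] with m hm using hm
      have h3 : ∀ᶠ m in atTop, i < k m := by
        filter_upwards [eventually_ge_atTop (i + 1)] with m hm
        exact lt_of_lt_of_le (by omega) (hm.trans hk.le_apply)
      filter_upwards [h2, h3] with m hm1 hm2
      have hle : σ (k m) i ≤ τ i := by
        have hmem := hσE (k m)
        rw [hEdesc] at hmem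
        exact hmem i hm2
      have heqr : ρ (k m) i = (⟨σ (k m) i, mem_Iic.mpr hle⟩ : Iic (τ i)) := by
        simp only [ρ, Subtype.mk.injEq]
        exact min_eq_left hle
      rw [heqr] at hm1
      exact congrArg Subtype.val hm1
    have hσtend : Tendsto (fun m => σ (k m)) atTop (𝓝 σlim) := by
      rw [tendsto_pi_nhds]
      intro i
      exact tendsto_const_nhds.congr' ((hcoord i).mono fun m h => h.symm)
    have hφtend : Tendsto (fun m => φ (σ (k m))) atTop (𝓝 (φ σlim)) :=
      (hφ.tendsto σlim).comp hσtend
    have hytend : Tendsto (fun m => φ (σ (k m))) atTop (𝓝 y) :=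
      hU.tendsto fun m => hU.antitone hk.le_apply (hσU (k m))
    exact ⟨σlim, hσlimK, tendsto_nhds_unique hφtend hytend⟩
  -- put it together
  have hDmeas : ∀ n, NullMeasurableSet (D n) ν :=
    fun n => isClosed_closure.measurableSet.nullMeasurableSet
  have hiInf : ν (⋂ n, D n) = ⨅ n, ν (D n) :=
    (hDanti.directed_ge).measure_iInter hDmeas ⟨0, measure_ne_top ν _⟩
  have hDn : ∀ n, ν (range φ) - ε ≤ ν (D n) := by
    intro n
    refine tsub_le_iff_right.mpr ?_
    calc ν (range φ) ≤ ν (φ '' E n) + ∑ i ∈ Finset.range n, δ i := hbound n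
    _ ≤ ν (D n) + ε := by
        gcongr
        · exact subset_closure
        · exact hδsum n
  calc ν (range φ) ≤ (ν (range φ) - ε) + ε := le_tsub_add
  _ ≤ ν (⋂ n, D n) + ε := add_le_add_left (by rw [hiInf]; exact le_iInf hDn) ε
  _ ≤ ν (φ '' K) + ε := add_le_add_left (measure_mono hdiag) ε

theorem compact_min_selection {C : Type*} [TopologicalSpace C] [T2Space C]
    [MeasurableSpace C] [OpensMeasurableSpace C] (L : Set (C × ℝ)) (hL : IsCompact L) :
    ∃ g : C → ℝ, Measurable g ∧ ∀ c ∈ Prod.fst '' L, (c, g c) ∈ L := by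
  classical
  set S : C → Set ℝ := fun c => {y | (c, y) ∈ L} with hS
  have hScl : ∀ c, IsClosed (S c) :=
    fun c => hL.isClosed.preimage (Continuous.prodMk_right c)
  have hScpt : ∀ c, IsCompact (S c) := by
    intro c
    refine IsCompact.of_isClosed_subset (hL.image continuous_snd) (hScl c) ?_
    exact fun y hy => ⟨(c, y), hy, rfl⟩
  have hSne : ∀ c ∈ Prod.fst '' L, (S c).Nonempty := by
    rintro c ⟨⟨c', y⟩, hy, rfl⟩
    exact ⟨y, hy⟩
  set g : C → ℝ := fun c => sInf (S c) with hg
  have hsel : ∀ c ∈ Prod.fst '' L, (c, g c) ∈ L :=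
    fun c hc => (hScpt c).sInf_mem (hSne c hc)
  refine ⟨g, ?_, hsel⟩
  refine measurable_of_Iio fun a => ?_
  have hPq : ∀ q : ℚ, MeasurableSet (Prod.fst '' (L ∩ {p : C × ℝ | p.2 ≤ (q : ℝ)})) := by
    intro q
    have hcpt : IsCompact (L ∩ {p : C × ℝ | p.2 ≤ (q : ℝ)}) :=
      hL.inter_right (isClosed_le continuous_snd continuous_const)
    exact (hcpt.image continuous_fst).isClosed.measurableSet
  have hP : MeasurableSet (Prod.fst '' L) :=
    (hL.image continuous_fst).isClosed.measurableSet
  have heq : g ⁻¹' Iio a =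
      (⋃ q : ℚ, ⋃ _ : (q : ℝ) < a, Prod.fst '' (L ∩ {p : C × ℝ | p.2 ≤ (q : ℝ)})) ∪
      ((Prod.fst '' L)ᶜ ∩ {c | (0 : ℝ) < a}) := by
    ext c
    simp only [mem_preimage, mem_Iio, mem_union, mem_iUnion, mem_inter_iff, mem_compl_iff,
      mem_setOf_eq]
    constructor
    · intro hc
      by_cases hcs : c ∈ Prod.fst '' L
      · left
        have hmem : g c ∈ S c := (hScpt c).sInf_mem (hSne c hcs)
        obtain ⟨q, hq1, hq2⟩ := exists_rat_btwn hc
        exact ⟨q, hq2, (c, g c), ⟨hmem, le_of_lt hq1⟩, rfl⟩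
      · right
        have hSempty : S c = ∅ := by
          by_contra h
          exact hcs ⟨(c, (nonempty_iff_ne_empty.mpr h).some),
            (nonempty_iff_ne_empty.mpr h).some_mem, rfl⟩
        refine ⟨hcs, ?_⟩
        have : g c = 0 := by rw [hg]; simp only [hSempty]; exact Real.sInf_empty
        rwa [this] at hc
    · rintro (⟨q, hq, ⟨c₁, y⟩, ⟨hyL, hyle⟩, rfl⟩ | ⟨hcs, ha⟩)
      · have hbdd : BddBelow (S c₁) := (hScpt c₁).bddBelow
        show g c₁ < a
        calc g c₁ ≤ y := csInf_le hbdd hyL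
        _ ≤ (q : ℝ) := hyle
        _ < a := hq
      · have hSempty : S c = ∅ := by
          rw [eq_empty_iff_forall_notMem]
          exact fun y hy => hcs ⟨(c, y), hy, rfl⟩
        have : g c = 0 := by rw [hg]; simp only [hSempty]; exact Real.sInf_empty
        rw [this]; exact ha
  rw [heq]
  refine MeasurableSet.union ?_ ?_
  · exact MeasurableSet.iUnion fun q => MeasurableSet.iUnion fun _ => hPq q
  · refine hP.compl.inter ?_
    by_cases ha : (0 : ℝ) < a
    · have h1 : {c : C | (0 : ℝ) < a} = univ := eq_univ_of_forall fun c => ha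
      rw [h1]; exact MeasurableSet.univ
    · have h1 : {c : C | (0 : ℝ) < a} = ∅ := eq_empty_iff_forall_notMem.mpr fun c hc => ha hc
      rw [h1]; exact MeasurableSet.empty

/-- Partial measurable selection off a set of measure at most `ε`. -/
theorem exists_partial_selection {Ω : Type*} [MeasurableSpace Ω] (μ : Measure Ω)
    [IsFiniteMeasure μ] (G : Set (Ω × ℝ)) (hG : MeasurableSet G)
    (hne : ∀ ω, ∃ y, (ω, y) ∈ G) {ε : ℝ≥0∞} (hε : ε ≠ 0) :
    ∃ (B : Set Ω) (x : Ω → ℝ), MeasurableSet B ∧ Measurable x ∧ μ Bᶜ ≤ ε ∧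
      ∀ ω ∈ B, (ω, x ω) ∈ G := by
  classical
  rcases isEmpty_or_nonempty Ω with hΩ | hΩ
  · refine ⟨∅, fun _ => 0, MeasurableSet.empty, measurable_const, ?_, fun ω h => absurd h (notMem_empty ω)⟩
    have : (∅ : Set Ω)ᶜ = ∅ := by
      rw [compl_empty]
      exact univ_eq_empty_iff.mpr hΩ
    rw [this, measure_empty]
    exact zero_le
  obtain ⟨f, G', hf, hG', hGeq⟩ := exists_factorization G hG
  have hG'ne : G'.Nonempty := by
    obtain ⟨ω₀⟩ := hΩ
    obtain ⟨y, hy⟩ := hne ω₀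
    rw [hGeq] at hy
    exact ⟨_, hy⟩
  -- G' is analytic
  haveI : TopologicalSpace.IsCompletelyMetrizableSpace (ℕ → Bool) :=
    TopologicalSpace.IsCompletelyMetrizableSpace.pi_countable
  have hana : AnalyticSet G' := hG'.analyticSet
  rw [AnalyticSet_def] at hana
  rcases hana with hempty | ⟨φ, hφc, hφr⟩
  · exact absurd hempty (nonempty_iff_ne_empty.mp hG'ne)
  set ν : Measure (ℕ → Bool) := μ.map f with hν
  haveI : IsFiniteMeasure ν := by
    constructor
    rw [hν, Measure.map_apply hf MeasurableSet.univ]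
    exact measure_lt_top μ _
  set ψ : (ℕ → ℕ) → (ℕ → Bool) := Prod.fst ∘ φ with hψ
  obtain ⟨K, hK, hKν⟩ := exists_compact_core ν ψ (continuous_fst.comp hφc) hε
  set L : Set ((ℕ → Bool) × ℝ) := φ '' K with hL
  have hLcpt : IsCompact L := hK.image hφc
  obtain ⟨g, hgmeas, hgsel⟩ := compact_min_selection L hLcpt
  have hfstL : MeasurableSet (Prod.fst '' L) :=
    (hLcpt.image continuous_fst).isClosed.measurableSet
  set B : Set Ω := f ⁻¹' (Prod.fst '' L) with hB
  refine ⟨B, fun ω => g (f ω), hf hfstL, hgmeas.comp hf, ?_, ?_⟩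
  · -- measure estimate
    have h1 : μ univ ≤ ν (range ψ) := by
      have h2 : f ⁻¹' (range ψ) = univ := by
        rw [eq_univ_iff_forall]
        intro ω
        obtain ⟨y, hy⟩ := hne ω
        rw [hGeq] at hy
        have : (f ω, y) ∈ G' := hy
        rw [← hφr] at this
        obtain ⟨σ, hσ⟩ := this
        exact ⟨σ, congrArg Prod.fst hσ⟩
      calc μ univ = μ (f ⁻¹' (range ψ)) := by rw [h2]
      _ ≤ ν (range ψ) := Measure.le_map_apply hf.aemeasurable _
    have h3 : ψ '' K = Prod.fst '' L := by
      rw [hψ, hL, image_comp]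
    have h4 : ν (Prod.fst '' L) = μ B := Measure.map_apply hf hfstL
    have h5 : μ univ ≤ μ B + ε := by
      calc μ univ ≤ ν (range ψ) := h1
      _ ≤ ν (ψ '' K) + ε := hKν
      _ = μ B + ε := by rw [h3, h4]
    calc μ Bᶜ = μ univ - μ B := measure_compl (hf hfstL) (measure_ne_top μ B)
    _ ≤ ε := tsub_le_iff_right.mpr (by rwa [add_comm ε (μ B)])
  · intro ω hω
    have hmem : (f ω, g (f ω)) ∈ L := hgsel (f ω) hω
    have hG'mem : (f ω, g (f ω)) ∈ G' := by
      rw [← hφr]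
      exact image_subset_range φ K hmem
    rw [hGeq]
    exact hG'mem

/-- Almost-everywhere measurable selection for real-valued targets. -/
theorem exists_ae_selection {Ω : Type*} [MeasurableSpace Ω] (μ : Measure Ω)
    [IsFiniteMeasure μ] (G : Set (Ω × ℝ)) (hG : MeasurableSet G)
    (hne : ∀ ω, ∃ y, (ω, y) ∈ G) :
    ∃ x : Ω → ℝ, Measurable x ∧ ∀ᵐ ω ∂μ, (ω, x ω) ∈ G := by
  classical
  have key : ∀ n : ℕ, ∃ (B : Set Ω) (x : Ω → ℝ), MeasurableSet B ∧ Measurable x ∧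
      μ Bᶜ ≤ (2⁻¹ : ℝ≥0∞) ^ n ∧ ∀ ω ∈ B, (ω, x ω) ∈ G := fun n =>
    exists_partial_selection μ G hG hne (pow_ne_zero n (by simp))
  choose B x hB hx hμB hsel using key
  set T : Set Ω := ⋂ n, (B n)ᶜ with hT
  have hTmeas : MeasurableSet T := MeasurableSet.iInter fun n => (hB n).compl
  have hT0 : μ T = 0 := by
    have h1 : ∀ n, μ T ≤ (2⁻¹ : ℝ≥0∞) ^ n :=
      fun n => (measure_mono (iInter_subset _ n)).trans (hμB n)
    have h2 : Tendsto (fun n : ℕ => (2⁻¹ : ℝ≥0∞) ^ n) atTop (𝓝 0) :=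
      ENNReal.tendsto_pow_atTop_nhds_zero_of_lt_one (by simp [ENNReal.inv_lt_one])
    exact le_antisymm (ge_of_tendsto' h2 h1) zero_le
  set p : ℕ → Ω → Prop := fun n ω => ω ∈ B n ∪ T with hp
  letI : ∀ n, DecidablePred (p n) := fun n ω => Classical.propDecidable _
  have htot : ∀ ω, ∃ n, p n ω := by
    intro ω
    by_cases hω : ω ∈ T
    · exact ⟨0, Or.inr hω⟩
    · rw [hT, mem_iInter] at hω
      push_neg at hω
      obtain ⟨n, hn⟩ := hω
      exact ⟨n, Or.inl (not_not.mp hn)⟩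
  refine ⟨fun ω => x (Nat.find (htot ω)) ω, ?_, ?_⟩
  · exact Measurable.find (p := p) hx (fun n => (hB n).union hTmeas) htot
  · have hsub : {ω | ¬ (ω, x (Nat.find (htot ω)) ω) ∈ G} ⊆ T := by
      intro ω hω
      by_contra hωT
      rcases Nat.find_spec (htot ω) with h | h
      · exact hω (hsel _ _ h)
      · exact hωT h
    rw [ae_iff]
    exact measure_mono_null hsub hT0

theorem integrable_selections_nonempty {Ω Y : Type*} [MeasurableSpace Ω]
    [NormedAddCommGroup Y] [NormedSpace ℝ Y] [CompleteSpace Y]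
    [SecondCountableTopology Y] [MeasurableSpace Y] [BorelSpace Y]
    {μ : Measure Ω} [IsFiniteMeasure μ] (hμ : μ.IsComplete)
    (P : Ω → Set Y)
    (hne : ∀ ω, (P ω).Nonempty)
    (hgraph : MeasurableSet {p : Ω × Y | p.2 ∈ P p.1})
    (hbd : ∃ h : Ω → ℝ, Integrable h μ ∧ ∀ᵐ ω ∂μ, ∀ y ∈ P ω, ‖y‖ ≤ h ω) :
    ∃ x : Ω → Y, Integrable x μ ∧ ∀ᵐ ω ∂μ, x ω ∈ P ω := by
  classical
  obtain ⟨h, hhint, hhbd⟩ := hbd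
  rcases isEmpty_or_nonempty Ω with hΩ | hΩ
  · refine ⟨fun ω => (hne ω).some, ?_, ?_⟩
    · rw [μ.eq_zero_of_isEmpty]
      exact integrable_zero_measure
    · exact ae_of_all μ fun ω => (hne ω).some_mem
  haveI : Nonempty Y := ⟨(hne (Classical.arbitrary Ω)).some⟩
  obtain ⟨e, he⟩ := exists_measurableEmbedding_real Y
  have hemb : MeasurableEmbedding (Prod.map (id : Ω → Ω) e) :=
    MeasurableEmbedding.id.prodMap he
  set G : Set (Ω × ℝ) := Prod.map (id : Ω → Ω) e '' {p : Ω × Y | p.2 ∈ P p.1} with hG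
  have hGmeas : MeasurableSet G := hemb.measurableSet_image' hgraph
  have hGne : ∀ ω, ∃ t, (ω, t) ∈ G := fun ω =>
    ⟨e (hne ω).some, ⟨(ω, (hne ω).some), (hne ω).some_mem, rfl⟩⟩
  obtain ⟨x', hx'meas, hx'sel⟩ := exists_ae_selection μ G hGmeas hGne
  obtain ⟨r, hr, hre⟩ := he.exists_measurable_extend measurable_id fun _ => ‹Nonempty Y›
  have hmem : ∀ᵐ ω ∂μ, r (x' ω) ∈ P ω := by
    filter_upwards [hx'sel] with ω hω
    obtain ⟨⟨ω₁, y⟩, hy, heq⟩ := hω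
    have h1 : ω₁ = ω := congrArg Prod.fst heq
    have h2 : e y = x' ω := congrArg Prod.snd heq
    subst h1
    have : r (e y) = y := congrFun hre y
    rw [← h2, this]
    exact hy
  refine ⟨fun ω => r (x' ω), ?_, hmem⟩
  have hsm : AEStronglyMeasurable (fun ω => r (x' ω)) μ :=
    ((hr.comp hx'meas).stronglyMeasurable).aestronglyMeasurable
  refine Integrable.mono' hhint hsm ?_
  filter_upwards [hmem, hhbd] with ω h1 h2
  exact h2 _ h1

end AumannSelection
end

section
/- Let Y be a normed space with dual Y′, A ⊆ Y convex, x ∈ A, and P : Y → 2^{Y′} a set-valued map with nonempty values that is monotone. Suppose that for every y ∈ A and every λ ∈ [0,1], with z_λ = λ y + (1−λ) x, we have sup{Re⟨u, x − z_λ⟩ : u ∈ P(z_λ)} ≤ 0. If moreover P is lower semicontinuous along each segment L = {z_λ : λ ∈ [0,1]} from the norm topology into the weak* topology, then sup{Re⟨u, x − y⟩ : u ∈ P(x)} ≤ 0 for all y ∈ A. -/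
/-- Minty-type argument: monotonicity plus lower semicontinuity along segments
into the weak* topology yields the variational inequality at `x`. -/
theorem minty_variational_inequality {Y : Type*} [NormedAddCommGroup Y] [NormedSpace ℝ Y]
    (A : Set Y) (hA : Convex ℝ A) (x : Y) (hx : x ∈ A)
    (P : Y → Set (WeakDual ℝ Y))
    (hne : ∀ w : Y, (P w).Nonempty)
    (hmono : ∀ a b : Y, ∀ u ∈ P b, ∀ v ∈ P a, v (b - a) ≤ u (b - a))
    (hineq : ∀ y ∈ A, ∀ lam ∈ Set.Icc (0:ℝ) 1,
      ∀ u ∈ P (lam • y + (1 - lam) • x), u (x - (lam • y + (1 - lam) • x)) ≤ 0)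
    (hlsc : ∀ y ∈ A, ∀ lam ∈ Set.Icc (0:ℝ) 1, ∀ V : Set (WeakDual ℝ Y), IsOpen V →
      (P (lam • y + (1 - lam) • x) ∩ V).Nonempty →
      ∃ ε > (0:ℝ), ∀ t ∈ Set.Icc (0:ℝ) 1, |t - lam| < ε →
        (P (t • y + (1 - t) • x) ∩ V).Nonempty) :
    ∀ y ∈ A, ∀ u ∈ P x, u (x - y) ≤ 0 := by
  intro y hy u hu
  by_contra h
  push_neg at h
  set c : ℝ := u (x - y) / 2 with hc
  have hcpos : 0 < c := by positivity
  set V : Set (WeakDual ℝ Y) := {w | c < w (x - y)} with hV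
  have hVopen : IsOpen V := by
    have hcont : Continuous fun w : WeakDual ℝ Y => w (x - y) :=
      WeakDual.eval_continuous (x - y)
    exact isOpen_lt continuous_const hcont
  have h0 : (P ((0:ℝ) • y + (1 - (0:ℝ)) • x) ∩ V).Nonempty := by
    refine ⟨u, ?_, ?_⟩
    · simpa using hu
    · simp only [hV, Set.mem_setOf_eq, hc]; linarith
  obtain ⟨ε, hεpos, hε⟩ := hlsc y hy 0 ⟨le_refl 0, zero_le_one⟩ V hVopen h0
  set t : ℝ := min (ε / 2) 1 with ht
  have htpos : 0 < t := lt_min (by positivity) one_pos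
  have ht1 : t ≤ 1 := min_le_right _ _
  have htε : |t - 0| < ε := by
    rw [sub_zero, abs_of_pos htpos]
    exact lt_of_le_of_lt (min_le_left _ _) (by linarith)
  obtain ⟨w, hwP, hwV⟩ := hε t ⟨le_of_lt htpos, ht1⟩ htε
  have hineq' := hineq y hy t ⟨le_of_lt htpos, ht1⟩ w hwP
  have hkey : x - (t • y + (1 - t) • x) = t • (x - y) := by
    module
  rw [hkey, map_smul, smul_eq_mul] at hineq'
  have : c < w (x - y) := hwV
  nlinarith
end

section
/- Let (Ω, F, μ) be a complete finite measure space, Y a complete separable metric space, and T : Ω → 2^Y a nonempty-valued set-valued map with measurable graph G_T ∈ F ⊗ B(Y). Then there exists a measurable function f : Ω → Y such that f(ω) ∈ T(ω) for μ-almost every ω. -/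
set_option maxHeartbeats 1000000

open MeasureTheory Set Filter Topology
open scoped ENNReal

private def seqEquiv : (ℕ → (ℕ → ℕ)) ≃ᵐ (ℕ → ℕ) where
  toFun f := fun n => f (Nat.unpair n).1 (Nat.unpair n).2
  invFun g := fun i j => g (Nat.pair i j)
  left_inv f := by funext i j; simp
  right_inv g := by funext n; simp [Nat.pair_unpair]
  measurable_toFun := measurable_pi_lambda
    (fun (f : ℕ → ℕ → ℕ) (n : ℕ) => f (Nat.unpair n).1 (Nat.unpair n).2)
    (fun n => (measurable_pi_apply ((Nat.unpair n).2)).comp (measurable_pi_apply ((Nat.unpair n).1)))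
  measurable_invFun := measurable_pi_lambda
    (fun (g : ℕ → ℕ) (i j : ℕ) => g (Nat.pair i j))
    (fun i => measurable_pi_lambda _ (fun j => measurable_pi_apply (Nat.pair i j)))

private theorem exists_factor {Ω Y : Type*} [MeasurableSpace Ω] [MeasurableSpace Y]
    {G : Set (Ω × Y)} (hG : MeasurableSet G) :
    ∃ (φ : Ω → (ℕ → ℕ)) (B : Set ((ℕ → ℕ) × Y)), Measurable φ ∧ MeasurableSet B ∧
      G = Prod.map φ id ⁻¹' B := by
  classical
  set C : Set (Ω × Y) → Prop := fun S =>
    ∃ (φ : Ω → (ℕ → ℕ)) (B : Set ((ℕ → ℕ) × Y)), Measurable φ ∧ MeasurableSet B ∧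
      S = Prod.map φ id ⁻¹' B with hC
  suffices h : C G by exact h
  have hempty : C ∅ := ⟨fun _ _ => 0, ∅, measurable_const, MeasurableSet.empty, by simp⟩
  have hcompl : ∀ S, C S → C Sᶜ := by
    rintro S ⟨φ, B, hφ, hB, rfl⟩
    exact ⟨φ, Bᶜ, hφ, hB.compl, by simp⟩
  have hunion : ∀ S : ℕ → Set (Ω × Y), (∀ n, C (S n)) → C (⋃ n, S n) := by
    intro S hS
    choose φ B hφ hB hSB using hS
    refine ⟨fun ω => seqEquiv (fun n => φ n ω),
      ⋃ n, (Prod.map (fun x => seqEquiv.symm x n) (id : Y → Y)) ⁻¹' (B n),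
      seqEquiv.measurable.comp (measurable_pi_lambda _ (fun n => hφ n)), ?_, ?_⟩
    · exact MeasurableSet.iUnion fun n =>
        ((((measurable_pi_apply n).comp seqEquiv.symm.measurable).prodMap measurable_id) (hB n))
    · ext ⟨ω, y⟩
      simp only [mem_iUnion, mem_preimage, Prod.map_apply, id_eq,
        MeasurableEquiv.symm_apply_apply]
      exact exists_congr fun n => by rw [hSB n]; rfl
  -- build measurable space structure
  let m' : MeasurableSpace (Ω × Y) :=
    { MeasurableSet' := C
      measurableSet_empty := hempty
      measurableSet_compl := hcompl
      measurableSet_iUnion := hunion }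
  have hle : (Prod.instMeasurableSpace : MeasurableSpace (Ω × Y)) ≤ m' := by
    rw [← generateFrom_prod]
    refine MeasurableSpace.generateFrom_le ?_
    rintro t ⟨s, hs, u, hu, rfl⟩
    refine ⟨fun ω _ => if ω ∈ s then 1 else 0, {x | x 0 = 1} ×ˢ u, ?_, ?_, ?_⟩
    · exact measurable_pi_lambda _ (fun _ => (measurable_const.ite hs measurable_const))
    · exact (measurable_pi_apply 0 (measurableSet_singleton 1)).prod hu
    · ext ⟨ω, y⟩
      by_cases hω : ω ∈ s <;> simp [hω]
  exact hle _ hG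

private noncomputable def Hset (K : Set (ℕ → ℕ)) (g : (ℕ → ℕ) → (ℕ → ℕ)) :
    ℕ → (ℕ → ℕ) → Set (ℕ → ℕ)
  | 0 => fun x => K ∩ g ⁻¹' {x}
  | (n + 1) => fun x => Hset K g n x ∩
      {z | z n = sInf {m | (Hset K g n x ∩ {z | z n = m}).Nonempty}}

private noncomputable def cfun (K : Set (ℕ → ℕ)) (g : (ℕ → ℕ) → (ℕ → ℕ)) (n : ℕ)
    (x : ℕ → ℕ) : ℕ :=
  sInf {m | (Hset K g n x ∩ {z | z n = m}).Nonempty}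

private def Eset (K : Set (ℕ → ℕ)) (g : (ℕ → ℕ) → (ℕ → ℕ)) (n : ℕ) (w : ℕ → ℕ)
    (m : ℕ) : Set (ℕ → ℕ) :=
  g '' (K ∩ {z | (∀ i < n, z i = w i) ∧ z n = m})

private theorem compact_selection {K : Set (ℕ → ℕ)} (hK : IsCompact K)
    {g : (ℕ → ℕ) → (ℕ → ℕ)} (hg : Continuous g) :
    ∃ σ : (ℕ → ℕ) → (ℕ → ℕ), Measurable σ ∧ ∀ x ∈ g '' K, σ x ∈ K ∧ g (σ x) = x := by
  classical
  set H := Hset K g with hH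
  set c := cfun K g with hc
  set E := Eset K g with hE
  have H_succ : ∀ n x, H (n + 1) x = H n x ∩ {z | z n = c n x} := fun n x => rfl
  have H_zero : ∀ x, H 0 x = K ∩ g ⁻¹' {x} := fun x => rfl
  have H_sub : ∀ n x, H n x ⊆ K ∩ g ⁻¹' {x} := by
    intro n
    induction n with
    | zero => exact fun x => subset_rfl
    | succ n ih => intro x; rw [H_succ]; exact (inter_subset_left).trans (ih x)
  have H_closed : ∀ n x, IsClosed (H n x) := by
    intro n
    induction n with
    | zero => exact fun x => hK.isClosed.inter (IsClosed.preimage hg isClosed_singleton)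
    | succ n ih => intro x; rw [H_succ]; exact (ih x).inter (isClosed_eq (continuous_apply n) continuous_const)
  have H_compact : ∀ n x, IsCompact (H n x) := fun n x =>
    (hK.inter_right (IsClosed.preimage hg isClosed_singleton)).of_isClosed_subset (H_closed n x) (H_sub n x)
  have H_ne : ∀ x ∈ g '' K, ∀ n, (H n x).Nonempty := by
    rintro x ⟨z, hz, rfl⟩ n
    induction n with
    | zero => exact ⟨z, hz, rfl⟩
    | succ n ih =>
      obtain ⟨w, hw⟩ := ih
      have hmem : sInf {m | (H n (g z) ∩ {z | z n = m}).Nonempty} ∈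
          {m | (H n (g z) ∩ {z | z n = m}).Nonempty} :=
        Nat.sInf_mem ⟨w n, ⟨w, hw, rfl⟩⟩
      obtain ⟨v, hv1, hv2⟩ := hmem
      exact ⟨v, by rw [H_succ]; exact ⟨hv1, hv2⟩⟩
  -- the selection
  set σ : (ℕ → ℕ) → ℕ → ℕ := fun x n => c n x with hσ
  have σ_mem : ∀ x ∈ g '' K, σ x ∈ K ∧ g (σ x) = x := by
    intro x hx
    have hne : (⋂ n, H n x).Nonempty := by
      refine IsCompact.nonempty_iInter_of_sequence_nonempty_isCompact_isClosed
        (fun n => H n x) (fun n => by show H (n + 1) x ⊆ H n x; rw [H_succ]; exact inter_subset_left)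
        (fun n => H_ne x hx n) (H_compact 0 x) (fun n => H_closed n x)
    obtain ⟨w, hw⟩ := hne
    simp only [mem_iInter] at hw
    have hwσ : w = σ x := by
      funext n
      have := hw (n + 1)
      rw [H_succ] at this
      exact this.2
    have h0 := hw 0
    rw [H_zero] at h0
    rw [← hwσ]
    exact ⟨h0.1, h0.2⟩
  -- history description
  have H_eq : ∀ n x, x ∈ g '' K → H n x = K ∩ g ⁻¹' {x} ∩ {z | ∀ i < n, z i = c i x} := by
    intro n x hx
    induction n with
    | zero => simp [H_zero]
    | succ n ih =>
      rw [H_succ, ih]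
      ext z
      simp only [mem_inter_iff, mem_setOf_eq, Nat.lt_succ_iff_lt_or_eq]
      constructor
      · rintro ⟨⟨hz1, hz2⟩, hz3⟩
        exact ⟨hz1, fun i hi => hi.elim (hz2 i) (fun h => h ▸ hz3)⟩
      · rintro ⟨hz1, hz2⟩
        exact ⟨⟨hz1, fun i hi => hz2 i (Or.inl hi)⟩, hz2 n (Or.inr rfl)⟩
  -- the compact "witness" sets
  have E_def : ∀ n w m, E n w m = g '' (K ∩ {z | (∀ i < n, z i = w i) ∧ z n = m}) :=
    fun n w m => rfl
  have E_meas : ∀ n w m, MeasurableSet (E n w m) := by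
    intro n w m
    have hcl : IsClosed {z : ℕ → ℕ | (∀ i < n, z i = w i) ∧ z n = m} := by
      have heq : {z : ℕ → ℕ | (∀ i < n, z i = w i) ∧ z n = m} =
          (⋂ i, ⋂ _ : i < n, {z : ℕ → ℕ | z i = w i}) ∩ {z : ℕ → ℕ | z n = m} := by
        ext z; simp [Set.mem_iInter, Set.mem_setOf_eq]
      rw [heq]
      exact (isClosed_iInter fun i => isClosed_iInter fun _ =>
        isClosed_eq (continuous_apply i) continuous_const).inter
        (isClosed_eq (continuous_apply n) continuous_const)
    rw [E_def]
    exact (((hK.inter_right hcl).image hg).isClosed).measurableSet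
  -- c characterization through E
  have c_char : ∀ n x, x ∈ g '' K → {m | (H n x ∩ {z | z n = m}).Nonempty} = {m | x ∈ E n (σ x) m} := by
    intro n x hx
    ext m
    simp only [mem_setOf_eq]
    rw [H_eq n x hx]
    constructor
    · rintro ⟨z, ⟨⟨hz1, hz2⟩, hz3⟩, hz4⟩
      exact ⟨z, ⟨hz1, hz3, hz4⟩, hz2⟩
    · rintro ⟨z, ⟨hz1, hz3, hz4⟩, hz2⟩
      exact ⟨z, ⟨⟨hz1, hz2⟩, hz3⟩, hz4⟩
  -- E depends only on first n coordinates of w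
  have E_congr : ∀ n (w w' : ℕ → ℕ), (∀ i < n, w i = w' i) → ∀ m, E n w m = E n w' m := by
    intro n w w' hww m
    have : {z : ℕ → ℕ | (∀ i < n, z i = w i) ∧ z n = m} = {z | (∀ i < n, z i = w' i) ∧ z n = m} := by
      ext z
      exact and_congr (forall₂_congr fun i hi => by rw [hww i hi]) Iff.rfl
    rw [E_def, E_def, this]
  -- x in E-set characterization of the value c n x
  have c_in : ∀ n x, x ∈ g '' K → x ∈ E n (σ x) (c n x) := by
    intro n x hx
    have h1 := H_ne x hx (n + 1)
    rw [H_succ] at h1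
    obtain ⟨z, hz1, hz2⟩ := h1
    have : c n x ∈ {m | (H n x ∩ {z | z n = m}).Nonempty} := ⟨z, hz1, hz2⟩
    rwa [c_char n x hx] at this
  have c_min : ∀ n x, x ∈ g '' K → ∀ m' < c n x, x ∉ E n (σ x) m' := by
    intro n x hx m' hm' hcon
    have : m' ∈ {m | (H n x ∩ {z | z n = m}).Nonempty} := by
      rw [c_char n x hx]; exact hcon
    have hle : c n x ≤ m' := Nat.sInf_le this
    omega
  have hout : ∀ n x, x ∉ g '' K → c n x = 0 := by
    intro n x hx
    have hempty : H n x = ∅ := by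
      refine eq_empty_of_subset_empty ((H_sub n x).trans ?_)
      rintro z ⟨hz1, hz2⟩
      exact hx ⟨z, hz1, hz2⟩
    have h2 : {m | (H n x ∩ {z | z n = m}).Nonempty} = ∅ := by
      ext m; simp [hempty]
    have h3 : c n x = sInf {m | (H n x ∩ {z | z n = m}).Nonempty} := rfl
    rw [h3, h2, Nat.sInf_empty]
  -- measurability of c by strong induction
  have c_meas : ∀ n m : ℕ, MeasurableSet {x | c n x = m} := by
    intro n
    induction n using Nat.strong_induction_on with
    | _ n ih =>
      intro m
      have key : {x | c n x = m} ∩ g '' K =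
          (⋃ w : Fin n → ℕ, ((g '' K ∩ ⋂ i : Fin n, {x | c i x = w i}) ∩
            (E n (fun i => if h : i < n then w ⟨i, h⟩ else 0) m ∩
              ⋂ m' : Fin m, (E n (fun i => if h : i < n then w ⟨i, h⟩ else 0) m')ᶜ))) := by
        ext x
        simp only [mem_inter_iff, mem_iUnion, mem_iInter, mem_setOf_eq, mem_compl_iff]
        constructor
        · rintro ⟨hcn, hx⟩
          refine ⟨fun i => c i x, ⟨hx, fun i => rfl⟩, ?_, ?_⟩
          · rw [E_congr n _ (σ x) (fun i hi => by simp [hi, hσ]) m]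
            rw [← hcn]; exact c_in n x hx
          · intro m'
            rw [E_congr n _ (σ x) (fun i hi => by simp [hi, hσ]) m']
            exact c_min n x hx m' (by rw [hcn]; exact m'.isLt)
        · rintro ⟨w, ⟨hx, hw⟩, hmem, hnot⟩
          refine ⟨?_, hx⟩
          have hcongr : ∀ m'' : ℕ, E n (fun i => if h : i < n then w ⟨i, h⟩ else 0) m'' =
              E n (σ x) m'' := by
            intro m''
            refine E_congr n _ (σ x) (fun i hi => ?_) m''
            simp only [hi, dif_pos]
            exact (hw ⟨i, hi⟩).symm
          rw [hcongr] at hmem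
          by_contra hne'
          rcases Nat.lt_or_ge (c n x) m with hlt | hge
          · exact hnot ⟨c n x, hlt⟩ (by rw [hcongr]; exact c_in n x hx)
          · exact c_min n x hx m (by omega) hmem
      have hKmeas : MeasurableSet (g '' K) := (hK.image hg).isClosed.measurableSet
      have hmain : MeasurableSet ({x | c n x = m} ∩ g '' K) := by
        rw [key]
        refine MeasurableSet.iUnion fun w => ?_
        have h1 : MeasurableSet (⋂ i : Fin n, {x | c i.1 x = w i}) :=
          MeasurableSet.iInter fun i => ih i.1 i.isLt (w i)
        have h2 : MeasurableSet (E n (fun i => if h : i < n then w ⟨i, h⟩ else 0) m) :=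
          E_meas n _ m
        have h3 : MeasurableSet
            (⋂ m' : Fin m, (E n (fun i => if h : i < n then w ⟨i, h⟩ else 0) (m' : ℕ))ᶜ) :=
          MeasurableSet.iInter fun m' => (E_meas n _ m').compl
        exact (hKmeas.inter h1).inter (h2.inter h3)
      have hdecomp : {x | c n x = m} =
          ({x | c n x = m} ∩ g '' K) ∪ ({x : ℕ → ℕ | m = 0} ∩ (g '' K)ᶜ) := by
        ext x
        constructor
        · intro h
          by_cases hx : x ∈ g '' K
          · exact Or.inl ⟨h, hx⟩
          · exact Or.inr ⟨by rw [← h]; exact (hout n x hx).symm ▸ (hout n x hx), hx⟩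
        · rintro (⟨h, _⟩ | ⟨h1, h2⟩)
          · exact h
          · show c n x = m
            rw [hout n x h2, h1]
      rw [hdecomp]
      refine hmain.union (MeasurableSet.inter ?_ hKmeas.compl)
      by_cases hm : m = 0
      · simp [hm]
      · simp [hm]
  refine ⟨σ, ?_, σ_mem⟩
  refine measurable_pi_lambda σ fun n => ?_
  refine measurable_to_countable' fun m => ?_
  exact c_meas n m

private theorem compact_approx (ν : Measure (ℕ → ℕ)) [IsFiniteMeasure ν]
    {g : (ℕ → ℕ) → (ℕ → ℕ)} (hg : Continuous g) {ε : ℝ≥0∞} (hε : ε ≠ 0) :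
    ∃ K : Set (ℕ → ℕ), IsCompact K ∧ ν (range g) ≤ ν (g '' K) + ε := by
  classical
  obtain ⟨δ, hδpos, hδsum⟩ := ENNReal.exists_pos_sum_of_countable hε ℕ
  -- choice of coordinate bounds
  have pick : ∀ (n : ℕ) (s : Set (ℕ → ℕ)),
      ∃ m : ℕ, ν (g '' s) ≤ ν (g '' (s ∩ {z | z n ≤ m})) + δ n := by
    intro n s
    have hmono : Monotone (fun m : ℕ => s ∩ {z | z n ≤ m}) := by
      intro a b hab
      exact inter_subset_inter_right _ (fun z hz => le_trans hz hab)
    have hcup : (⋃ m : ℕ, g '' (s ∩ {z | z n ≤ m})) = g '' s := by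
      apply Subset.antisymm
      · exact iUnion_subset fun m => image_mono (f := g) inter_subset_left
      · exact image_subset_iff.mpr fun z hz =>
          mem_iUnion.mpr ⟨z n, mem_image_of_mem g ⟨hz, show z n ≤ z n from le_refl _⟩⟩
    have hdir : Directed (· ⊆ ·) (fun m : ℕ => g '' (s ∩ {z | z n ≤ m})) :=
      (Monotone.directed_le fun a b hab => image_mono (hmono hab))
    have hsup : ν (g '' s) = ⨆ m : ℕ, ν (g '' (s ∩ {z | z n ≤ m})) := by
      rw [← hcup, hdir.measure_iUnion]
    set a := ν (g '' s) with ha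
    rcases eq_or_ne a 0 with h0 | h0
    · exact ⟨0, by rw [h0]; exact zero_le⟩
    have hane : a ≠ ⊤ := measure_ne_top ν _
    have hlt : a - δ n < a := ENNReal.sub_lt_self hane h0 (by exact_mod_cast (hδpos n).ne' : (δ n : ℝ≥0∞) ≠ 0)
    have hlt2 : a - δ n < ⨆ m : ℕ, ν (g '' (s ∩ {z | z n ≤ m})) := hlt.trans_le (le_of_eq hsup)
    obtain ⟨m, hm⟩ := lt_iSup_iff.mp hlt2
    refine ⟨m, ?_⟩
    by_cases hda : (δ n : ℝ≥0∞) ≤ a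
    · calc a = a - δ n + δ n := (tsub_add_cancel_of_le hda).symm
        _ ≤ ν (g '' (s ∩ {z | z n ≤ m})) + δ n := add_le_add_left hm.le _
    · exact le_trans (le_of_not_ge hda) le_add_self
  choose pickF pickspec using pick
  -- the decreasing sets
  let S : ℕ → Set (ℕ → ℕ) := fun n => Nat.rec univ (fun n Sn => Sn ∩ {z | z n ≤ pickF n Sn}) n
  have S_zero : S 0 = univ := rfl
  have S_succ : ∀ n, S (n + 1) = S n ∩ {z | z n ≤ pickF n (S n)} := fun n => rfl
  let k : ℕ → ℕ := fun n => pickF n (S n)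
  have S_eq : ∀ n, S n = {z | ∀ i < n, z i ≤ k i} := by
    intro n
    induction n with
    | zero => simp [S_zero]
    | succ n ih =>
      rw [S_succ]
      ext z
      constructor
      · rintro ⟨h1, h2⟩
        rw [ih] at h1
        intro i hi
        rcases Nat.lt_succ_iff_lt_or_eq.mp hi with h | h
        · exact h1 i h
        · exact h ▸ h2
      · intro hz
        refine ⟨?_, hz n (Nat.lt_succ_self n)⟩
        rw [ih]
        exact fun i hi => hz i (Nat.lt_succ_of_lt hi)
  have S_anti : ∀ n, S (n + 1) ⊆ S n := fun n => by rw [S_succ]; exact inter_subset_left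
  have S_antitone : Antitone S := antitone_nat_of_succ_le S_anti
  -- the invariant
  have inv : ∀ n, ν (range g) ≤ ν (g '' S n) + ∑ i ∈ Finset.range n, (δ i : ℝ≥0∞) := by
    intro n
    induction n with
    | zero => simp [S_zero, image_univ]
    | succ n ih =>
      calc ν (range g) ≤ ν (g '' S n) + ∑ i ∈ Finset.range n, (δ i : ℝ≥0∞) := ih
        _ ≤ (ν (g '' S (n + 1)) + δ n) + ∑ i ∈ Finset.range n, (δ i : ℝ≥0∞) := by
            refine add_le_add_left ?_ _
            rw [S_succ]
            exact pickspec n (S n)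
        _ = ν (g '' S (n + 1)) + ∑ i ∈ Finset.range (n + 1), (δ i : ℝ≥0∞) := by
            rw [Finset.sum_range_succ]
            ring
  have inv' : ∀ n, ν (range g) ≤ ν (g '' S n) + ε := by
    intro n
    refine le_trans (inv n) (add_le_add_right ?_ _)
    exact le_trans (ENNReal.sum_le_tsum _) hδsum.le
  -- the compact set
  let K : Set (ℕ → ℕ) := univ.pi fun i => Iic (k i)
  have hKcompact : IsCompact K := isCompact_univ_pi fun i => (finite_Iic (k i)).isCompact
  have hKS : ∀ n, K ⊆ S n := by
    intro n
    rw [S_eq]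
    intro z hz i _
    exact hz i (mem_univ i)
  -- g '' K = ⋂ closure (g '' S n)
  have hKeq : g '' K = ⋂ n, closure (g '' S n) := by
    apply Subset.antisymm
    · refine subset_iInter fun n => (image_mono (f := g) (hKS n)).trans subset_closure
    · intro x hx
      simp only [mem_iInter] at hx
      -- choose approximating sequence
      obtain ⟨V, hV⟩ := (nhds x).exists_antitone_basis
      have hw : ∀ n : ℕ, ∃ w, w ∈ S n ∧ g w ∈ V n := by
        intro n
        have := mem_closure_iff_nhds.mp (hx n) (V n) (hV.mem n)
        obtain ⟨y, hy1, ⟨w, hw1, rfl⟩⟩ := this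
        exact ⟨w, hw1, hy1⟩
      choose w hwS hwV using hw
      -- bound all coordinates
      set b : ℕ → ℕ := fun i => max (k i) ((Finset.range (i + 1)).sup fun n => w n i) with hb
      have hwb : ∀ n, w n ∈ univ.pi fun i => Iic (b i) := by
        intro n
        intro i _
        simp only [mem_Iic, hb]
        rcases Nat.lt_or_ge i n with hin | hin
        · have := (S_eq n ▸ hwS n) i hin
          exact le_max_of_le_left this
        · exact le_max_of_le_right
            (Finset.le_sup (f := fun n => w n i) (Finset.mem_range.mpr (by omega)))
      have hbcompact : IsCompact (univ.pi fun i => Iic (b i)) :=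
        isCompact_univ_pi fun i => (finite_Iic (b i)).isCompact
      obtain ⟨z, hzb, φ, hφmono, hφtendsto⟩ := hbcompact.tendsto_subseq hwb
      refine ⟨z, ?_, ?_⟩
      · -- z ∈ K
        intro i _
        simp only [mem_Iic]
        have hcoord : Tendsto (fun j => w (φ j) i) atTop (nhds (z i)) :=
          (tendsto_pi_nhds.mp hφtendsto) i
        have heq : ∀ᶠ j in atTop, w (φ j) i = z i := by
          have hzmem : {z i} ∈ nhds (z i) := (isOpen_discrete _).mem_nhds rfl
          filter_upwards [hcoord hzmem] with j hj using hj
        obtain ⟨j, hj1, hj2⟩ := (heq.and (eventually_ge_atTop (i + 1))).exists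
        rw [← hj1]
        have hφj : i < φ j := lt_of_lt_of_le (Nat.lt_succ_of_le (le_refl i)) (le_trans hj2 (hφmono.le_apply))
        exact (S_eq (φ j) ▸ hwS (φ j)) i hφj
      · -- g z = x
        have h1 : Tendsto (fun j => g (w (φ j))) atTop (nhds (g z)) :=
          (hg.tendsto z).comp hφtendsto
        have h2 : Tendsto (fun j => g (w (φ j))) atTop (nhds x) := by
          refine hV.tendsto ?_
          intro j
          exact hV.antitone hφmono.le_apply (hwV (φ j))
        exact tendsto_nhds_unique h1 h2
  -- measure computation
  refine ⟨K, hKcompact, ?_⟩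
  have hclosed_meas : ∀ n, NullMeasurableSet (closure (g '' S n)) ν :=
    fun n => (isClosed_closure.measurableSet).nullMeasurableSet
  have hdir : Directed (· ⊇ ·) fun n => closure (g '' S n) := by
    refine (antitone_nat_of_succ_le ?_).directed_ge
    intro n
    exact closure_mono (image_mono (f := g) (S_anti n))
  have hfin : ∃ n, ν (closure (g '' S n)) ≠ ⊤ := ⟨0, measure_ne_top ν _⟩
  have hiInf : ν (g '' K) = ⨅ n, ν (closure (g '' S n)) := by
    rw [hKeq]
    exact hdir.measure_iInter hclosed_meas hfin
  rw [hiInf]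
  have : ∀ n, ν (range g) ≤ ν (closure (g '' S n)) + ε := fun n =>
    le_trans (inv' n) (add_le_add_left (measure_mono subset_closure) _)
  calc ν (range g) ≤ ⨅ n, (ν (closure (g '' S n)) + ε) := le_iInf this
    _ = (⨅ n, ν (closure (g '' S n))) + ε := by
        rw [ENNReal.iInf_add]

private theorem polish_selection {Y : Type*} [MetricSpace Y] [CompleteSpace Y]
    [SecondCountableTopology Y] [MeasurableSpace Y] [BorelSpace Y]
    (ν : Measure (ℕ → ℕ)) [IsFiniteMeasure ν] {B : Set ((ℕ → ℕ) × Y)}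
    (hB : MeasurableSet B) (hBne : B.Nonempty) :
    ∃ u : (ℕ → ℕ) → Y, Measurable u ∧ ∃ N : Set (ℕ → ℕ), MeasurableSet N ∧ ν N = 0 ∧
      ∀ x ∉ N, {y | (x, y) ∈ B}.Nonempty → (x, u x) ∈ B := by
  classical
  -- B is analytic
  have hPolish : PolishSpace ((ℕ → ℕ) × Y) := inferInstance
  have hana : AnalyticSet B := hB.analyticSet
  rw [AnalyticSet] at hana
  rcases hana with hempty | ⟨F, hFcont, hFrange⟩
  · exact absurd hempty (nonempty_iff_ne_empty.mp hBne)
  obtain ⟨p₀, hp₀⟩ := hBne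
  set g : (ℕ → ℕ) → (ℕ → ℕ) := fun z => (F z).1 with hgdef
  set h : (ℕ → ℕ) → Y := fun z => (F z).2 with hhdef
  have hgcont : Continuous g := (continuous_fst).comp hFcont
  have hhcont : Continuous h := (continuous_snd).comp hFcont
  -- compact approximations
  have hKn : ∀ n : ℕ, ∃ K : Set (ℕ → ℕ), IsCompact K ∧
      ν (range g) ≤ ν (g '' K) + (((n : ℝ≥0∞) + 1))⁻¹ := by
    intro n
    refine compact_approx ν hgcont ?_
    exact ENNReal.inv_ne_zero.mpr (by simp)
  choose K hKcompact hKapprox using hKn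
  -- selections on each compact
  have hσn : ∀ n : ℕ, ∃ σ : (ℕ → ℕ) → (ℕ → ℕ), Measurable σ ∧
      ∀ x ∈ g '' K n, σ x ∈ K n ∧ g (σ x) = x := fun n =>
    compact_selection (hKcompact n) hgcont
  choose σ hσmeas hσspec using hσn
  set L : ℕ → Set (ℕ → ℕ) := fun n => g '' K n with hL
  have hLmeas : ∀ n, MeasurableSet (L n) :=
    fun n => (((hKcompact n).image hgcont).isClosed).measurableSet
  set U : Set (ℕ → ℕ) := ⋃ n, L n with hU
  have hUmeas : MeasurableSet U := MeasurableSet.iUnion hLmeas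
  -- the selection function
  have htotal : ∀ x, ∃ n, x ∈ L n ∨ x ∉ U := by
    intro x
    by_cases hx : x ∈ U
    · obtain ⟨n, hn⟩ := mem_iUnion.mp hx
      exact ⟨n, Or.inl hn⟩
    · exact ⟨0, Or.inr hx⟩
  set u : (ℕ → ℕ) → Y := fun x =>
    (fun n x => if x ∈ L n then h (σ n x) else p₀.2) (Nat.find (htotal x)) x with hu
  have humeas : Measurable u := by
    refine Measurable.find (f := fun n x => if x ∈ L n then h (σ n x) else p₀.2)
      (fun n => Measurable.ite (hLmeas n) (hhcont.measurable.comp (hσmeas n)) measurable_const)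
      (fun n => ?_) htotal
    exact (hLmeas n).union hUmeas.compl
  have huB : ∀ x ∈ U, (x, u x) ∈ B := by
    intro x hx
    have hfind := Nat.find_spec (htotal x)
    rcases hfind with hmem | hnot
    · rw [hu]
      simp only [hmem, if_pos]
      obtain ⟨hσK, hσg⟩ := hσspec (Nat.find (htotal x)) x hmem
      have : F (σ (Nat.find (htotal x)) x) ∈ B := by
        rw [← hFrange]; exact mem_range_self _
      have hpair : F (σ (Nat.find (htotal x)) x) = (x, h (σ (Nat.find (htotal x)) x)) := by
        rw [Prod.ext_iff]
        exact ⟨hσg, rfl⟩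
      rwa [hpair] at this
    · exact absurd hx hnot
  -- the null set
  have hnull : ν (range g \ U) = 0 := by
    have hbound : ∀ n : ℕ, ν (range g \ U) ≤ (((n : ℝ≥0∞) + 1))⁻¹ := by
      intro n
      have hinter := measure_inter_add_diff (μ := ν) (range g) hUmeas
      have h1 : ν (g '' K n) ≤ ν (range g ∩ U) := by
        refine measure_mono fun x hx => ⟨?_, mem_iUnion.mpr ⟨n, hx⟩⟩
        obtain ⟨z, _, rfl⟩ := hx
        exact mem_range_self z
      have h2 : ν (range g ∩ U) + ν (range g \ U) ≤ ν (range g ∩ U) + (((n : ℝ≥0∞) + 1))⁻¹ := by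
        rw [hinter]
        calc ν (range g) ≤ ν (g '' K n) + (((n : ℝ≥0∞) + 1))⁻¹ := hKapprox n
          _ ≤ ν (range g ∩ U) + (((n : ℝ≥0∞) + 1))⁻¹ := add_le_add_left h1 _
      exact (ENNReal.add_le_add_iff_left (measure_ne_top ν _)).mp h2
    by_contra hne
    obtain ⟨n, hn⟩ := ENNReal.exists_inv_nat_lt hne
    have hcontr : ((n : ℝ≥0∞) + 1)⁻¹ < ν (range g \ U) :=
      calc ((n : ℝ≥0∞) + 1)⁻¹ ≤ ((n : ℝ≥0∞))⁻¹ := ENNReal.inv_le_inv.mpr le_self_add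
        _ < ν (range g \ U) := hn
    exact lt_irrefl _ ((hbound n).trans_lt hcontr)
  refine ⟨u, humeas, toMeasurable ν (range g \ U), measurableSet_toMeasurable ν _, ?_, ?_⟩
  · rw [measure_toMeasurable]; exact hnull
  · intro x hxN hsec
    obtain ⟨y, hy⟩ := hsec
    have hxrange : x ∈ range g := by
      have : (x, y) ∈ range F := hFrange.symm ▸ hy
      obtain ⟨z, hz⟩ := this
      exact ⟨z, congrArg Prod.fst hz⟩
    have hxU : x ∈ U := by
      by_contra hxU
      exact hxN (subset_toMeasurable ν _ ⟨hxrange, hxU⟩)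
    exact huB x hxU


/-- Aumann measurable selection theorem. -/
theorem aumann_measurable_selection {Ω Y : Type*} [MeasurableSpace Ω]
    [MetricSpace Y] [CompleteSpace Y] [SecondCountableTopology Y]
    [MeasurableSpace Y] [BorelSpace Y]
    {μ : Measure Ω} [IsFiniteMeasure μ] (hμ : μ.IsComplete)
    (T : Ω → Set Y) (hne : ∀ ω, (T ω).Nonempty)
    (hgraph : MeasurableSet {p : Ω × Y | p.2 ∈ T p.1}) :
    ∃ f : Ω → Y, Measurable f ∧ ∀ᵐ ω ∂μ, f ω ∈ T ω := by
  classical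
  rcases isEmpty_or_nonempty Ω with hΩ | hΩ
  · refine ⟨fun ω => isEmptyElim ω, Subsingleton.measurable, ae_of_all _ fun ω => isEmptyElim ω⟩
  -- factor the graph through a measurable map to ℕ → ℕ
  obtain ⟨φ, B, hφ, hB, hGB⟩ := exists_factor hgraph
  -- sections of B at φ ω coincide with T ω
  have hsec : ∀ ω y, y ∈ T ω ↔ (φ ω, y) ∈ B := by
    intro ω y
    constructor
    · intro hy
      have : (ω, y) ∈ {p : Ω × Y | p.2 ∈ T p.1} := hy
      rw [hGB] at this
      exact this
    · intro hy
      have : (ω, y) ∈ Prod.map φ id ⁻¹' B := hy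
      rw [← hGB] at this
      exact this
  -- B is nonempty
  have hBne : B.Nonempty := by
    obtain ⟨ω₀⟩ := hΩ
    obtain ⟨y₀, hy₀⟩ := hne ω₀
    exact ⟨(φ ω₀, y₀), (hsec ω₀ y₀).mp hy₀⟩
  -- pushforward measure
  set ν : Measure (ℕ → ℕ) := μ.map φ with hν
  have hνfin : IsFiniteMeasure ν := by
    constructor
    rw [hν, Measure.map_apply hφ MeasurableSet.univ]
    exact measure_lt_top μ _
  obtain ⟨u, humeas, N, hNmeas, hNnull, hNsel⟩ := polish_selection ν hB hBne
  refine ⟨u ∘ φ, humeas.comp hφ, ?_⟩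
  rw [ae_iff]
  have hsub : {ω | ¬ (u ∘ φ) ω ∈ T ω} ⊆ φ ⁻¹' N := by
    intro ω hω
    by_contra hωN
    refine hω ?_
    have hsecne : {y | (φ ω, y) ∈ B}.Nonempty := by
      obtain ⟨y₀, hy₀⟩ := hne ω
      exact ⟨y₀, (hsec ω y₀).mp hy₀⟩
    have := hNsel (φ ω) hωN hsecne
    exact (hsec ω (u (φ ω))).mpr this
  refine measure_mono_null hsub ?_
  rw [← Measure.map_apply hφ hNmeas, ← hν]
  exact hNnull
end

section
/- Let (Ω, F, μ) be a complete finite measure space and Y a complete separable metric space. If H ∈ F ⊗ B(Y), then the projection Proj_Ω(H) = {ω ∈ Ω : ∃ y, (ω, y) ∈ H} belongs to F. -/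
open MeasureTheory Set ENNReal

namespace MP

variable {α : Type*}

/-- prefix of length `n` of `σ` as a list -/
def pre (σ : ℕ → ℕ) (n : ℕ) : List ℕ := (List.range n).map σ

@[simp] lemma pre_zero (σ : ℕ → ℕ) : pre σ 0 = [] := rfl

@[simp] lemma pre_length (σ : ℕ → ℕ) (n : ℕ) : (pre σ n).length = n := by
  simp [pre]

lemma pre_succ (σ : ℕ → ℕ) (n : ℕ) :
    pre σ (n + 1) = σ 0 :: pre (σ ∘ Nat.succ) n := by
  simp [pre, List.range_succ_eq_map, Function.comp]

lemma pre_take (σ : ℕ → ℕ) {m n : ℕ} (h : m ≤ n) : (pre σ n).take m = pre σ m := by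
  simp [pre, ← List.map_take, List.take_range, Nat.min_eq_left h]

lemma pre_prefix (σ : ℕ → ℕ) {m n : ℕ} (h : m ≤ n) : pre σ m <+: pre σ n := by
  rw [List.prefix_iff_eq_take, pre_length, pre_take σ h]

lemma pre_getD (σ : ℕ → ℕ) {i n : ℕ} (h : i < n) : (pre σ n).getD i 0 = σ i := by
  simp [pre, List.getD, List.getElem?_map, List.getElem?_range h]

/-- the Suslin operation -/
def suslin (u : List ℕ → Set α) : Set α := ⋃ σ : ℕ → ℕ, ⋂ n, u (pre σ n)

lemma mem_suslin {u : List ℕ → Set α} {x : α} :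
    x ∈ suslin u ↔ ∃ σ : ℕ → ℕ, ∀ n, x ∈ u (pre σ n) := by
  simp [suslin]

/-- a scheme is regular if it is antitone with respect to the prefix order -/
def Reg (u : List ℕ → Set α) : Prop := ∀ ⦃s t : List ℕ⦄, s <+: t → u t ⊆ u s

/-- regularization of a scheme -/
def reg (u : List ℕ → Set α) : List ℕ → Set α :=
  fun s => ⋂ n ∈ Finset.range (s.length + 1), u (s.take n)

lemma reg_subset (u : List ℕ → Set α) (s : List ℕ) : reg u s ⊆ u s := by
  intro x hx
  have := mem_iInter₂.1 hx s.length (by simp)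
  simpa using this

lemma Reg_reg (u : List ℕ → Set α) : Reg (reg u) := by
  intro s t hst x hx
  have hle : s.length ≤ t.length := hst.length_le
  refine mem_iInter₂.2 fun n hn => ?_
  have hn' : n ≤ s.length := by simpa using Nat.lt_succ_iff.1 (Finset.mem_range.1 hn)
  have : s.take n = t.take n := by
    rw [List.prefix_iff_eq_take.1 hst, List.take_take, Nat.min_eq_left hn']
  rw [this]
  exact mem_iInter₂.1 hx n (Finset.mem_range.2 (Nat.lt_succ_of_le (hn'.trans hle)))

lemma suslin_reg (u : List ℕ → Set α) : suslin (reg u) = suslin u := by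
  ext x
  simp only [mem_suslin]
  constructor
  · rintro ⟨σ, hσ⟩
    exact ⟨σ, fun n => reg_subset u _ (hσ n)⟩
  · rintro ⟨σ, hσ⟩
    refine ⟨σ, fun n => mem_iInter₂.2 fun m hm => ?_⟩
    have hm' : m ≤ n := by simpa using Nat.lt_succ_iff.1 (Finset.mem_range.1 (by simpa using hm))
    rw [pre_take σ hm']
    exact hσ m



/-- continuity from below of the outer measure induced by a measure,
for arbitrary (not necessarily measurable) monotone sequences of sets -/
lemma measure_iUnion_eq_iSup_of_monotone {Ω : Type*} [MeasurableSpace Ω] (μ : Measure Ω)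
    {s : ℕ → Set Ω} (hs : Monotone s) : μ (⋃ n, s n) = ⨆ n, μ (s n) := by
  apply le_antisymm
  · set t : ℕ → Set Ω := fun n => ⋂ m : {m // n ≤ m}, toMeasurable μ (s m) with ht
    have hmeas : ∀ n, MeasurableSet (t n) :=
      fun n => MeasurableSet.iInter fun m => measurableSet_toMeasurable μ _
    have hsub : ∀ n, s n ⊆ t n := fun n =>
      subset_iInter fun m => (hs m.2).trans (subset_toMeasurable μ _)
    have hmono : Monotone t := by
      intro a b hab
      intro x hx
      exact mem_iInter.2 fun m => mem_iInter.1 hx ⟨m, hab.trans m.2⟩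
    have ht_le : ∀ n, μ (t n) ≤ μ (s n) := fun n => by
      calc μ (t n) ≤ μ (toMeasurable μ (s n)) := measure_mono (iInter_subset (fun m : {m // n ≤ m} => toMeasurable μ (s m)) ⟨n, le_rfl⟩)
        _ = μ (s n) := measure_toMeasurable _
    calc μ (⋃ n, s n) ≤ μ (⋃ n, t n) := measure_mono (iUnion_mono hsub)
      _ = ⨆ n, μ (t n) := hmono.directed_le.measure_iUnion
      _ ≤ ⨆ n, μ (s n) := iSup_mono ht_le
  · exact iSup_le fun n => measure_mono (subset_iUnion s n)





lemma pre_concat (σ : ℕ → ℕ) (n : ℕ) : pre σ (n + 1) = pre σ n ++ [σ n] := by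
  simp [pre, List.range_succ]

section tail
variable (u : List ℕ → Set α)

/-- the part of `suslin u` coming from branches extending `s` -/
def tail (s : List ℕ) : Set α := ⋃ τ : ℕ → ℕ, ⋂ n, u (s ++ pre τ n)

lemma tail_nil : tail u [] = suslin u := by simp [tail, suslin]

lemma tail_subset (s : List ℕ) : tail u s ⊆ u s := by
  intro x hx
  obtain ⟨τ, hτ⟩ := mem_iUnion.1 hx
  have := mem_iInter.1 hτ 0
  simpa [pre] using this

lemma tail_subset_of_prefix (hr : Reg u) {s t : List ℕ} (h : s <+: t) :
    tail u t ⊆ u s := (tail_subset u t).trans (hr h)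

lemma tail_eq_iUnion (hr : Reg u) (s : List ℕ) :
    tail u s = ⋃ j : ℕ, tail u (s ++ [j]) := by
  ext x
  simp only [tail, mem_iUnion, mem_iInter]
  constructor
  · rintro ⟨σ, hσ⟩
    refine ⟨σ 0, σ ∘ Nat.succ, fun n => ?_⟩
    have := hσ (n + 1)
    rwa [pre_succ, ← List.singleton_append, ← List.append_assoc] at this
  · rintro ⟨j, τ, hτ⟩
    refine ⟨fun n => Nat.casesOn n j τ, fun n => ?_⟩
    cases n with
    | zero =>
      have h0 := hτ 0
      simp only [pre, List.range_zero, List.map_nil, List.append_nil] at h0 ⊢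
      exact hr (by simp) h0
    | succ n =>
      have : pre (fun n => Nat.casesOn n j τ : ℕ → ℕ) (n + 1) = j :: pre τ n := by
        rw [pre_succ]; rfl
      rw [this, ← List.singleton_append, ← List.append_assoc]
      exact hτ n

end tail

section bdd

lemma getD_concat_lt {s : List ℕ} {j : ℕ} {i : ℕ} (h : i < s.length) :
    (s ++ [j]).getD i 0 = s.getD i 0 := by
  rw [List.getD_eq_getElem _ _ (by simp; omega), List.getD_eq_getElem _ _ h,
    List.getElem_append_left h]

lemma getD_concat_self {s : List ℕ} {j : ℕ} :
    (s ++ [j]).getD s.length 0 = j := by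
  rw [List.getD_eq_getElem _ _ (by simp)]
  simp

lemma getD_prefix {s t : List ℕ} (h : s <+: t) {i : ℕ} (hi : i < s.length) :
    s.getD i 0 = t.getD i 0 := by
  rw [List.getD_eq_getElem _ _ hi, List.getD_eq_getElem _ _ (hi.trans_le h.length_le)]
  exact h.getElem hi

/-- lists bounded coordinatewise by `k` -/
def bdd (k : List ℕ) : Set (List ℕ) :=
  {s | s.length = k.length ∧ ∀ i, i < s.length → s.getD i 0 ≤ k.getD i 0}

lemma bdd_nil : bdd [] = {([] : List ℕ)} := by
  ext s
  simp only [bdd, List.length_nil, mem_setOf_eq, mem_singleton_iff, List.length_eq_zero_iff]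
  constructor
  · rintro ⟨h, -⟩; exact h
  · rintro rfl; simp

lemma mem_bdd_concat {k s : List ℕ} {m : ℕ} :
    s ∈ bdd (k ++ [m]) ↔ ∃ t j, s = t ++ [j] ∧ t ∈ bdd k ∧ j ≤ m := by
  constructor
  · rintro ⟨hlen, hle⟩
    simp only [List.length_append, List.length_singleton] at hlen
    rcases s.eq_nil_or_concat with rfl | ⟨t, j, hs⟩
    · simp at hlen
    rw [List.concat_eq_append] at hs
    subst hs
    simp only [List.length_append, List.length_singleton] at hlen
    refine ⟨t, j, rfl, ⟨by omega, fun i hi => ?_⟩, ?_⟩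
    · have h1 : i < (t ++ [j]).length := by simp; omega
      have := hle i h1
      rwa [getD_concat_lt hi, getD_concat_lt (by omega)] at this
    · have htl : t.length = k.length := by omega
      have := hle t.length (by simp)
      rwa [getD_concat_self, htl, getD_concat_self] at this
  · rintro ⟨t, j, rfl, ⟨hlen, hle⟩, hj⟩
    refine ⟨by simp [hlen], fun i hi => ?_⟩
    simp only [List.length_append, List.length_singleton] at hi
    rcases lt_or_eq_of_le (Nat.lt_succ_iff.1 hi) with h | h
    · rw [getD_concat_lt h, getD_concat_lt (hlen ▸ h)]
      exact hle i h
    · subst h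
      rw [getD_concat_self, hlen, getD_concat_self]
      exact hj

lemma mem_bdd_take {k s : List ℕ} (hs : s ∈ bdd k) {k' : List ℕ} (hk : k' <+: k) :
    s.take k'.length ∈ bdd k' := by
  obtain ⟨hlen, hle⟩ := hs
  have h1 : k'.length ≤ s.length := hlen ▸ hk.length_le
  refine ⟨by simp [Nat.min_eq_left h1], fun i hi => ?_⟩
  have hi' : i < k'.length := by simpa [Nat.min_eq_left h1] using hi
  rw [getD_prefix (s.take_prefix k'.length) (by simpa [Nat.min_eq_left h1] using hi'), getD_prefix hk hi']
  exact hle i (hi'.trans_le h1)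

end bdd

section Dsec
variable {α : Type*} {u : List ℕ → Set α}

/-- prefix helpers -/
lemma prefix_take_of_prefix {a c : List α'} {k : ℕ} (h : a <+: c) (hk : a.length ≤ k) :
    a <+: c.take k := by
  have h1 : a = c.take a.length := List.prefix_iff_eq_take.1 h
  have : a = (c.take k).take a.length := by
    rw [List.take_take, Nat.min_eq_left hk]; exact h1
  rw [List.prefix_iff_eq_take]
  exact this

lemma concat_prefix_of {s t : List ℕ} (h : s <+: t) (hlt : s.length < t.length) :
    s ++ [t.getD s.length 0] <+: t := by
  have h1 : t.take (s.length + 1) = t.take s.length ++ [t.getD s.length 0] := by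
    rw [List.take_succ, List.getElem?_eq_getElem hlt, List.getD_eq_getElem _ _ hlt]
    rfl
  have h2 : s = t.take s.length := List.prefix_iff_eq_take.1 h
  rw [← h2] at h1
  exact h1 ▸ List.take_prefix _ t

/-- the sets `D k` -/
def D (u : List ℕ → Set α) (k : List ℕ) : Set α := ⋃ s ∈ bdd k, tail u s

lemma D_nil : D u [] = suslin u := by simp [D, bdd_nil, tail_nil]

lemma D_concat_mono (k : List ℕ) : Monotone (fun m => D u (k ++ [m])) := by
  intro m m' hmm'
  refine iUnion₂_subset fun s hs => ?_
  obtain ⟨t, j, rfl, ht, hj⟩ := mem_bdd_concat.1 hs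
  exact subset_iUnion₂ (s := fun s _ => tail u s) _ (mem_bdd_concat.2 ⟨t, j, rfl, ht, hj.trans hmm'⟩)

lemma iUnion_D_concat (hr : Reg u) (k : List ℕ) : ⋃ m, D u (k ++ [m]) = D u k := by
  apply le_antisymm
  · refine iUnion_subset fun m => iUnion₂_subset fun s hs => ?_
    obtain ⟨t, j, rfl, ht, _⟩ := mem_bdd_concat.1 hs
    have h1 : tail u (t ++ [j]) ⊆ tail u t := by
      rw [tail_eq_iUnion u hr t]
      exact subset_iUnion (fun j => tail u (t ++ [j])) j
    exact h1.trans (subset_iUnion₂ (s := fun s _ => tail u s) t ht)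
  · refine iUnion₂_subset fun t ht x hx => ?_
    rw [tail_eq_iUnion u hr t] at hx
    obtain ⟨j, hj⟩ := mem_iUnion.1 hx
    refine mem_iUnion.2 ⟨j, ?_⟩
    exact mem_iUnion₂.2 ⟨t ++ [j], mem_bdd_concat.2 ⟨t, j, rfl, ht, le_rfl⟩, hj⟩

variable {Ω : Type*} [MeasurableSpace Ω] {μ : Measure Ω} [IsFiniteMeasure μ]

lemma exists_D_concat {u : List ℕ → Set Ω} (hr : Reg u) (k : List ℕ) {δ : ℝ≥0∞} (hδ : δ ≠ 0) :
    ∃ m, μ (D u k) ≤ μ (D u (k ++ [m])) + δ := by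
  by_cases hδ' : δ = ∞
  · exact ⟨0, by simp [hδ']⟩
  have hsup : μ (D u k) = ⨆ m, μ (D u (k ++ [m])) := by
    rw [← measure_iUnion_eq_iSup_of_monotone μ (D_concat_mono k), iUnion_D_concat hr k]
  by_cases h0 : μ (D u k) = 0
  · exact ⟨0, by simp [h0]⟩
  have hlt : μ (D u k) - δ < ⨆ m, μ (D u (k ++ [m])) := by
    rw [← hsup]
    exact ENNReal.sub_lt_self (measure_ne_top μ _) h0 hδ
  obtain ⟨m, hm⟩ := lt_iSup_iff.1 hlt
  refine ⟨m, ?_⟩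
  by_cases hle : μ (D u k) ≤ δ
  · exact hle.trans (le_add_self)
  have := (ENNReal.sub_lt_iff_lt_right hδ' (le_of_not_ge hle)).1 hm
  exact this.le

/-- Kőnig's lemma step: a point in all the `E n` belongs to `suslin u`. -/
lemma mem_suslin_of_forall {u : List ℕ → Set α} (hr : Reg u) {Kl : ℕ → List ℕ}
    (hKlen : ∀ n, (Kl n).length = n) (hKpre : ∀ {n m : ℕ}, n ≤ m → Kl n <+: Kl m)
    {x : α} (hx : ∀ n, ∃ s ∈ bdd (Kl n), x ∈ u s) : x ∈ suslin u := by
  classical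
  set T : Set (List ℕ) := {s | s ∈ bdd (Kl s.length) ∧ x ∈ u s} with hT
  have hT0 : ∀ n, ∃ s ∈ T, s.length = n := by
    intro n
    obtain ⟨s, hs, hxs⟩ := hx n
    have hlen : s.length = n := by rw [hs.1, hKlen]
    exact ⟨s, ⟨by rwa [hlen], hxs⟩, hlen⟩
  have hTpre : ∀ {s t : List ℕ}, t ∈ T → s <+: t → s ∈ T := by
    rintro s t ⟨⟨htlen, htle⟩, hxt⟩ hst
    refine ⟨⟨by rw [hKlen], fun i hi => ?_⟩, hr hst hxt⟩
    rw [getD_prefix hst hi, getD_prefix (hKpre (hst.length_le)) (by rwa [hKlen])]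
    exact htle i (hi.trans_le hst.length_le)
  set Good : List ℕ → Prop := fun s => ∀ n, ∃ t ∈ T, s <+: t ∧ t.length = s.length + n with hGood
  have hGoodnil : Good [] := by
    intro n
    obtain ⟨t, ht, htlen⟩ := hT0 n
    exact ⟨t, ht, t.nil_prefix, by simpa using htlen⟩
  have step : ∀ s, Good s → ∃ j, (s ++ [j]) ∈ T ∧ Good (s ++ [j]) := by
    intro s hs
    choose t ht1 ht2 ht3 using fun n => hs (n + 1)
    have hlt : ∀ n, s.length < (t n).length := fun n => by rw [ht3]; omega
    set f : ℕ → ℕ := fun n => (t n).getD s.length 0 with hf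
    set Kb : ℕ := (Kl (s.length + 1)).getD s.length 0 with hKb
    have hbound : ∀ n, f n ≤ Kb := by
      intro n
      have h1 := ((ht1 n).1).2 s.length (hlt n)
      rwa [← getD_prefix (hKpre (by rw [ht3]; omega : s.length + 1 ≤ (t n).length))
        (by rw [hKlen]; omega)] at h1
    set g : ℕ → Fin (Kb + 1) := fun n => ⟨f n, Nat.lt_succ_of_le (hbound n)⟩ with hg
    obtain ⟨j0, hj0⟩ := Finite.exists_infinite_fiber g
    have hfib : (g ⁻¹' {j0}).Infinite := Set.infinite_coe_iff.1 hj0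
    refine ⟨(j0 : ℕ), ?_, ?_⟩
    · obtain ⟨n₀, hn₀⟩ := hfib.nonempty
      have hj : (t n₀).getD s.length 0 = (j0 : ℕ) := congrArg Fin.val hn₀
      have := concat_prefix_of (ht2 n₀) (hlt n₀)
      rw [hj] at this
      exact hTpre (ht1 n₀) this
    · intro n
      obtain ⟨m, hm, hnm⟩ := hfib.exists_gt n
      have hj : (t m).getD s.length 0 = (j0 : ℕ) := congrArg Fin.val hm
      have hpre1 : s ++ [(j0 : ℕ)] <+: t m := by
        have := concat_prefix_of (ht2 m) (hlt m)
        rwa [hj] at this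
      refine ⟨(t m).take (s.length + 1 + n), hTpre (ht1 m) (List.take_prefix _ _),
        prefix_take_of_prefix hpre1 (by simp), ?_⟩
      rw [List.length_take, ht3, List.length_append]
      simp only [List.length_singleton]
      omega
  set g' : List ℕ → ℕ := fun s => if h : Good s then (step s h).choose else 0 with hg'
  have hstep : ∀ s, Good s → (s ++ [g' s]) ∈ T ∧ Good (s ++ [g' s]) := by
    intro s hs
    simp only [hg', dif_pos hs]
    exact (step s hs).choose_spec
  set S : ℕ → List ℕ := fun n => Nat.rec [] (fun _ s => s ++ [g' s]) n with hS
  have hSsucc : ∀ n, S (n + 1) = S n ++ [g' (S n)] := fun n => rfl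
  have hSGood : ∀ n, Good (S n) := by
    intro n
    induction n with
    | zero => exact hGoodnil
    | succ n ih => rw [hSsucc]; exact (hstep _ ih).2
  have hST : ∀ n, S n ∈ T := by
    intro n
    cases n with
    | zero =>
      obtain ⟨t, ht, htlen⟩ := hT0 0
      rw [List.length_eq_zero_iff] at htlen
      rwa [htlen] at ht
    | succ n => rw [hSsucc]; exact (hstep _ (hSGood n)).1
  refine mem_suslin.2 ⟨fun n => g' (S n), fun n => ?_⟩
  have hpreS : ∀ n, pre (fun n => g' (S n)) n = S n := by
    intro n
    induction n with
    | zero => rfl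
    | succ n ih => rw [pre_concat, ih, hSsucc]
  rw [hpreS]
  exact (hST n).2

end Dsec

section approx
variable {Ω : Type*} [MeasurableSpace Ω] {μ : Measure Ω} [IsFiniteMeasure μ]

lemma exists_approx {u : List ℕ → Set Ω} (hu : ∀ s, MeasurableSet (u s)) (hr : Reg u)
    {ε : ℝ≥0∞} (hε : ε ≠ 0) :
    ∃ B : Set Ω, MeasurableSet B ∧ B ⊆ suslin u ∧ μ (suslin u) ≤ μ B + ε := by
  classical
  obtain ⟨δ, hδpos, hδsum⟩ := ENNReal.exists_pos_sum_of_countable hε ℕ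
  have hc : ∀ k : List ℕ, ∃ m, μ (D u k) ≤ μ (D u (k ++ [m])) + δ k.length := fun k =>
    exists_D_concat (μ := μ) hr k (by exact_mod_cast (hδpos k.length).ne')
  choose c hc using hc
  set Kl : ℕ → List ℕ := fun n => Nat.rec [] (fun _ k => k ++ [c k]) n with hKl
  have hKsucc : ∀ n, Kl (n + 1) = Kl n ++ [c (Kl n)] := fun n => rfl
  have hKlen : ∀ n, (Kl n).length = n := by
    intro n
    induction n with
    | zero => rfl
    | succ n ih => rw [hKsucc]; simp [ih]
  have hKpre : ∀ {n m : ℕ}, n ≤ m → Kl n <+: Kl m := by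
    intro n m h
    induction m with
    | zero => rw [Nat.le_zero.1 h]
    | succ m ih =>
      rcases Nat.lt_succ_iff_lt_or_eq.1 (Nat.lt_succ_of_le h) with h' | h'
      · exact (ih (Nat.lt_succ_iff.1 h')).trans
          (by rw [hKsucc]; exact (Kl m).prefix_append _)
      · rw [h']
  have hK3 : ∀ n, μ (suslin u) ≤ μ (D u (Kl n)) + ∑ i ∈ Finset.range n, (δ i : ℝ≥0∞) := by
    intro n
    induction n with
    | zero =>
      show μ (suslin u) ≤ μ (D u []) + _
      rw [D_nil]; simp
    | succ n ih =>
      refine ih.trans ?_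
      have h1 := hc (Kl n)
      rw [hKlen n] at h1
      calc μ (D u (Kl n)) + ∑ i ∈ Finset.range n, (δ i : ℝ≥0∞)
          ≤ (μ (D u (Kl (n + 1))) + (δ n : ℝ≥0∞)) + ∑ i ∈ Finset.range n, (δ i : ℝ≥0∞) := by
            rw [hKsucc] at *; exact add_le_add h1 le_rfl
        _ = μ (D u (Kl (n + 1))) + ∑ i ∈ Finset.range (n + 1), (δ i : ℝ≥0∞) := by
            rw [Finset.sum_range_succ]; ring
  set E : ℕ → Set Ω := fun n => ⋃ s ∈ bdd (Kl n), u s with hE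
  have hEmeas : ∀ n, MeasurableSet (E n) :=
    fun n => MeasurableSet.biUnion (Set.to_countable _) fun s _ => hu s
  have hDE : ∀ {n m : ℕ}, n ≤ m → D u (Kl m) ⊆ E n := by
    intro n m hnm
    refine iUnion₂_subset fun s hs => ?_
    have h1 : s.take (Kl n).length ∈ bdd (Kl n) := mem_bdd_take hs (hKpre hnm)
    exact (tail_subset_of_prefix u hr (s.take_prefix _)).trans
      (subset_iUnion₂ (s := fun s _ => u s) _ h1)
  set F : ℕ → Set Ω := fun n => ⋂ m ∈ Finset.range (n + 1), E m with hF
  have hFmeas : ∀ n, MeasurableSet (F n) :=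
    fun n => MeasurableSet.biInter (Finset.range _).countable_toSet fun m _ => hEmeas m
  have hFanti : Antitone F := by
    intro a b hab
    refine biInter_subset_biInter_left ?_
    intro m hm
    have h1 : m < a + 1 := Finset.mem_range.1 (by exact hm)
    exact Finset.mem_range.2 (by omega)
  have hDF : ∀ n, D u (Kl n) ⊆ F n := by
    intro n
    refine subset_iInter₂ fun m hm => hDE (by simp at hm; omega)
  refine ⟨⋂ n, F n, MeasurableSet.iInter hFmeas, ?_, ?_⟩
  · intro x hx
    refine mem_suslin_of_forall hr hKlen (fun {n m} h => hKpre h) fun n => ?_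
    have h1 : x ∈ E n := mem_iInter₂.1 (mem_iInter.1 hx n) n (by simp)
    obtain ⟨s, hs, hxs⟩ := mem_iUnion₂.1 h1
    exact ⟨s, hs, hxs⟩
  · have hmuF : μ (⋂ n, F n) = ⨅ n, μ (F n) :=
      Directed.measure_iInter (fun n => (hFmeas n).nullMeasurableSet)
        (hFanti.directed_ge) ⟨0, measure_ne_top μ _⟩
    have h1 : ∀ n, μ (suslin u) ≤ μ (F n) + ε := by
      intro n
      refine (hK3 n).trans (add_le_add (measure_mono (hDF n)) ?_)
      exact (ENNReal.sum_le_tsum _).trans hδsum.le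
    rw [hmuF]
    calc μ (suslin u) ≤ ⨅ n, (μ (F n) + ε) := le_iInf h1
      _ = (⨅ n, μ (F n)) + ε := ENNReal.iInf_add.symm

/-- Lusin–Sierpiński: a complete finite measure's σ-algebra is closed under the Suslin operation. -/
theorem measurableSet_suslin (hμ : μ.IsComplete) {u : List ℕ → Set Ω}
    (hu : ∀ s, MeasurableSet (u s)) : MeasurableSet (suslin u) := by
  rw [← suslin_reg u]
  have hu' : ∀ s, MeasurableSet (reg u s) :=
    fun s => MeasurableSet.biInter (Finset.range _).countable_toSet fun n _ => hu _
  have hr := Reg_reg u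
  set A := suslin (reg u) with hA
  have key : ∀ j : ℕ, ∃ B, MeasurableSet B ∧ B ⊆ A ∧ μ A ≤ μ B + (((j : ℝ≥0∞) + 1))⁻¹ := by
    intro j
    refine exists_approx hu' hr ?_
    simp [ENNReal.inv_ne_zero]
  choose B hBmeas hBsub hBle using key
  set B' := ⋃ j, B j with hB'
  have hB'meas : MeasurableSet B' := MeasurableSet.iUnion hBmeas
  have hB'sub : B' ⊆ A := iUnion_subset hBsub
  have hB'ge : μ A ≤ μ B' := by
    refine ENNReal.le_of_forall_pos_le_add fun ε hε _ => ?_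
    obtain ⟨n, hn⟩ := ENNReal.exists_inv_nat_lt (by exact_mod_cast hε.ne' : (ε : ℝ≥0∞) ≠ 0)
    refine (hBle n).trans (add_le_add (measure_mono (subset_iUnion B n)) ?_)
    refine le_trans ?_ hn.le
    refine ENNReal.inv_le_inv.2 ?_
    exact_mod_cast Nat.le_succ n
  have hnull : μ (A \ B') = 0 := by
    have h1 : A \ B' ⊆ toMeasurable μ A \ B' := diff_subset_diff_left (subset_toMeasurable μ A)
    have h2 : μ (toMeasurable μ A \ B') = μ (toMeasurable μ A) - μ B' :=
      measure_diff (hB'sub.trans (subset_toMeasurable μ A)) hB'meas.nullMeasurableSet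
        (measure_ne_top μ _)
    rw [measure_toMeasurable] at h2
    refine measure_mono_null h1 ?_
    rw [h2]
    exact tsub_eq_zero_of_le hB'ge
  have hAeq : A = B' ∪ (A \ B') := (union_diff_cancel hB'sub).symm
  rw [hAeq]
  exact hB'meas.union (hμ.out _ hnull)

end approx
section susclass
variable {α : Type*}

lemma iInter_prod_eq {ι : Sort*} {β γ : Type*} (A : ι → Set β) (B : ι → Set γ) :
    ⋂ i, (A i ×ˢ B i) = (⋂ i, A i) ×ˢ (⋂ i, B i) := by
  ext ⟨x, y⟩
  simp only [mem_iInter, mem_prod]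
  exact forall_and

lemma biInter_prod_eq {ι : Type*} {β γ : Type*} (p : ι → Prop) (A : ι → Set β) (B : ι → Set γ) :
    ⋂ i, ⋂ (_ : p i), (A i ×ˢ B i) = (⋂ i, ⋂ (_ : p i), A i) ×ˢ (⋂ i, ⋂ (_ : p i), B i) := by
  ext ⟨x, y⟩
  simp only [mem_iInter, mem_prod]
  constructor
  · intro h
    exact ⟨fun i hi => (h i hi).1, fun i hi => (h i hi).2⟩
  · rintro ⟨h1, h2⟩ i hi
    exact ⟨h1 i hi, h2 i hi⟩

lemma reg_prod_eq {β γ : Type*} (u : List ℕ → Set β) (v : List ℕ → Set γ) :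
    reg (fun s => u s ×ˢ v s) = fun s => reg u s ×ˢ reg v s := by
  funext s
  ext ⟨x, y⟩
  simp only [reg, mem_iInter, mem_prod, Finset.mem_range]
  constructor
  · intro h
    exact ⟨fun n hn => (h n hn).1, fun n hn => (h n hn).2⟩
  · rintro ⟨h1, h2⟩ n hn
    exact ⟨h1 n hn, h2 n hn⟩

/-- union of countably many Suslin schemes -/
lemma suslin_cons (f : ℕ → List ℕ → Set α) :
    suslin (fun s => match s with
      | [] => univ
      | i :: t => f i t) = ⋃ i, suslin (f i) := by
  ext x
  simp only [mem_suslin, mem_iUnion]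
  constructor
  · rintro ⟨σ, hσ⟩
    refine ⟨σ 0, ⟨σ ∘ Nat.succ, fun n => ?_⟩⟩
    have := hσ (n + 1)
    rwa [pre_succ] at this
  · rintro ⟨i, τ, hτ⟩
    refine ⟨fun n => Nat.casesOn n i τ, fun n => ?_⟩
    cases n with
    | zero => simp
    | succ n =>
      rw [pre_succ]
      exact hτ n

lemma pair_le_pair_right (a : ℕ) {m n : ℕ} (h : m ≤ n) : Nat.pair a m ≤ Nat.pair a n := by
  rcases lt_or_eq_of_le h with h | rfl
  · exact (Nat.pair_lt_pair_right a h).le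
  · exact le_rfl

/-- intersection of countably many regular Suslin schemes -/
lemma suslin_iInter (f : ℕ → List ℕ → Set α) (hf : ∀ i, Reg (f i)) :
    ⋂ i, suslin (f i) = suslin (fun s => ⋂ (p : ℕ), ⋂ (_ : p < s.length),
      f (Nat.unpair p).1
        ((List.range ((Nat.unpair p).2 + 1)).map (fun m => s.getD (Nat.pair (Nat.unpair p).1 m) 0))) := by
  have key : ∀ (σ : ℕ → ℕ) (N p : ℕ), p < N →
      ((List.range ((Nat.unpair p).2 + 1)).map
        (fun m => (pre σ N).getD (Nat.pair (Nat.unpair p).1 m) 0)) =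
      pre (σ ∘ Nat.pair (Nat.unpair p).1) ((Nat.unpair p).2 + 1) := by
    intro σ N p hp
    refine List.map_congr_left fun m hm => ?_
    have hm' : m ≤ (Nat.unpair p).2 := by
      have := List.mem_range.1 hm; omega
    have : Nat.pair (Nat.unpair p).1 m < N := by
      calc Nat.pair (Nat.unpair p).1 m ≤ Nat.pair (Nat.unpair p).1 (Nat.unpair p).2 :=
            pair_le_pair_right _ hm'
        _ = p := Nat.pair_unpair p
        _ < N := hp
    exact pre_getD σ this
  ext x
  simp only [mem_iInter, mem_suslin]
  constructor
  · intro h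
    choose τ hτ using h
    refine ⟨fun p => τ (Nat.unpair p).1 (Nat.unpair p).2, fun N p hp => ?_⟩
    rw [pre_length] at hp
    rw [key _ _ _ hp]
    have : (fun q => τ (Nat.unpair q).1 (Nat.unpair q).2) ∘ Nat.pair (Nat.unpair p).1 =
        τ (Nat.unpair p).1 := by
      funext m
      simp [Nat.unpair_pair]
    rw [this]
    exact hτ _ _
  · rintro ⟨σ, hσ⟩ i
    refine ⟨σ ∘ Nat.pair i, fun n => ?_⟩
    cases n with
    | zero =>
      have h2 := hσ (Nat.pair i 0 + 1) (Nat.pair i 0) (by simp)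
      rw [key _ _ _ (by simp)] at h2
      have h3 : x ∈ f i (pre (σ ∘ Nat.pair i) (0 + 1)) := by
        simpa [Nat.unpair_pair] using h2
      exact hf i (pre_prefix _ (by omega)) h3
    | succ n =>
      have h2 := hσ (Nat.pair i n + 1) (Nat.pair i n) (by simp)
      rw [key _ _ _ (by simp)] at h2
      simpa [Nat.unpair_pair] using h2

end susclass
section SusClass
variable {Ω Y : Type*} [MeasurableSpace Ω] [MetricSpace Y]

/-- the class of subsets of `Ω × Y` given by Suslin schemes of measurable-times-closed
rectangles, regular in each coordinate -/
def Sus (H : Set (Ω × Y)) : Prop :=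
  ∃ u : List ℕ → Set Ω, ∃ v : List ℕ → Set Y,
    (∀ s, MeasurableSet (u s)) ∧ (∀ s, IsClosed (v s)) ∧ Reg u ∧ Reg v ∧
    H = suslin (fun s => u s ×ˢ v s)

lemma Sus.of_schemes {u : List ℕ → Set Ω} {v : List ℕ → Set Y}
    (hu : ∀ s, MeasurableSet (u s)) (hv : ∀ s, IsClosed (v s)) :
    Sus (suslin (fun s => u s ×ˢ v s)) := by
  refine ⟨reg u, reg v, ?_, ?_, Reg_reg u, Reg_reg v, ?_⟩
  · exact fun s => MeasurableSet.biInter (Finset.range _).countable_toSet fun n _ => hu _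
  · exact fun s => isClosed_biInter fun n _ => hv _
  · rw [← suslin_reg (fun s => u s ×ˢ v s), reg_prod_eq]

lemma Sus.const {F : Set Ω} (hF : MeasurableSet F) {C : Set Y} (hC : IsClosed C) :
    Sus (F ×ˢ C) := by
  have h : F ×ˢ C = suslin (fun _ : List ℕ => F ×ˢ C) := by
    simp [suslin, iInter_const, iUnion_const]
  rw [h]
  exact Sus.of_schemes (fun _ => hF) (fun _ => hC)

lemma Sus.iUnion {f : ℕ → Set (Ω × Y)} (hf : ∀ i, Sus (f i)) : Sus (⋃ i, f i) := by
  choose u v hu hv _ _ heq using hf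
  set U : List ℕ → Set Ω := fun s => match s with
    | [] => univ
    | i :: t => u i t with hU
  set V : List ℕ → Set Y := fun s => match s with
    | [] => univ
    | i :: t => v i t with hV
  have hrect : (fun s : List ℕ => U s ×ˢ V s) = fun s => match s with
      | [] => univ
      | i :: t => u i t ×ˢ v i t := by
    funext s
    cases s with
    | nil => simp [hU, hV]
    | cons i t => rfl
  have h : ⋃ i, f i = suslin (fun s => U s ×ˢ V s) := by
    rw [hrect, suslin_cons (fun i t => u i t ×ˢ v i t)]
    exact iUnion_congr heq
  rw [h]
  refine Sus.of_schemes ?_ ?_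
  · intro s; cases s with
    | nil => exact MeasurableSet.univ
    | cons i t => exact hu i t
  · intro s; cases s with
    | nil => exact isClosed_univ
    | cons i t => exact hv i t

lemma Sus.union {a b : Set (Ω × Y)} (ha : Sus a) (hb : Sus b) : Sus (a ∪ b) := by
  have h : a ∪ b = ⋃ i : ℕ, (if i = 0 then a else b) := by
    ext x
    simp only [mem_union, mem_iUnion]
    constructor
    · rintro (h | h)
      · exact ⟨0, by simpa⟩
      · exact ⟨1, by simpa⟩
    · rintro ⟨i, hi⟩
      by_cases h0 : i = 0
      · left; rwa [if_pos h0] at hi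
      · right; rwa [if_neg h0] at hi
  rw [h]
  exact Sus.iUnion fun i => by by_cases h0 : i = 0 <;> simp [h0, ha, hb]

lemma Sus.iInter {f : ℕ → Set (Ω × Y)} (hf : ∀ i, Sus (f i)) : Sus (⋂ i, f i) := by
  choose u v hu hv hru hrv heq using hf
  have hreg : ∀ i, Reg (fun s => u i s ×ˢ v i s) := by
    intro i s t hst
    exact Set.prod_mono (hru i hst) (hrv i hst)
  have h : ⋂ i, f i = suslin (fun s => ⋂ (p : ℕ), ⋂ (_ : p < s.length),
      (fun s' => u (Nat.unpair p).1 s' ×ˢ v (Nat.unpair p).1 s')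
        ((List.range ((Nat.unpair p).2 + 1)).map (fun m => s.getD (Nat.pair (Nat.unpair p).1 m) 0))) := by
    rw [← suslin_iInter (fun i => fun s => u i s ×ˢ v i s) hreg]
    exact iInter_congr heq
  rw [h]
  have h2 : (fun s : List ℕ => ⋂ (p : ℕ), ⋂ (_ : p < s.length),
      (fun s' => u (Nat.unpair p).1 s' ×ˢ v (Nat.unpair p).1 s')
        ((List.range ((Nat.unpair p).2 + 1)).map (fun m => s.getD (Nat.pair (Nat.unpair p).1 m) 0))) =
      fun s : List ℕ =>
        (⋂ (p : ℕ), ⋂ (_ : p < s.length), u (Nat.unpair p).1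
          ((List.range ((Nat.unpair p).2 + 1)).map (fun m => s.getD (Nat.pair (Nat.unpair p).1 m) 0))) ×ˢ
        (⋂ (p : ℕ), ⋂ (_ : p < s.length), v (Nat.unpair p).1
          ((List.range ((Nat.unpair p).2 + 1)).map (fun m => s.getD (Nat.pair (Nat.unpair p).1 m) 0))) := by
    funext s
    exact biInter_prod_eq _ _ _
  rw [h2]
  refine Sus.of_schemes ?_ ?_
  · intro s
    exact MeasurableSet.biInter (to_countable _) fun p _ => hu _ _
  · intro s
    exact isClosed_biInter fun p _ => hv _ _

lemma Sus.prod_open {F : Set Ω} (hF : MeasurableSet F) {U : Set Y} (hU : IsOpen U) :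
    Sus (F ×ˢ U) := by
  set C : ℕ → Set Y := fun n => {y | ((n : ℝ≥0∞) + 1)⁻¹ ≤ EMetric.infEdist y Uᶜ} with hC
  have hCclosed : ∀ n, IsClosed (C n) :=
    fun n => isClosed_le continuous_const EMetric.continuous_infEdist
  have hCU : ⋃ n, C n = U := by
    ext y
    simp only [mem_iUnion, hC, mem_setOf_eq]
    constructor
    · rintro ⟨n, hn⟩
      have hpos : 0 < EMetric.infEdist y Uᶜ :=
        lt_of_lt_of_le (by simp [ENNReal.inv_pos]) hn
      have : y ∉ closure Uᶜ := EMetric.infEdist_pos_iff_notMem_closure.1 hpos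
      rw [hU.isClosed_compl.closure_eq] at this
      simpa using this
    · intro hy
      have hpos : 0 < EMetric.infEdist y Uᶜ := by
        refine EMetric.infEdist_pos_iff_notMem_closure.2 ?_; rw [hU.isClosed_compl.closure_eq]
        simpa using hy
      obtain ⟨n, hn⟩ := ENNReal.exists_inv_nat_lt hpos.ne'
      refine ⟨n, le_trans ?_ hn.le⟩
      refine ENNReal.inv_le_inv.2 ?_
      exact_mod_cast Nat.le_succ n
  have h : F ×ˢ U = ⋃ n, F ×ˢ C n := by rw [← prod_iUnion, hCU]
  rw [h]
  exact Sus.iUnion fun n => Sus.const hF (hCclosed n)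

lemma sus_empty : Sus (∅ : Set (Ω × Y)) := by
  have h : (∅ : Set (Ω × Y)) = (∅ : Set Ω) ×ˢ (∅ : Set Y) := by simp
  rw [h]
  exact Sus.const MeasurableSet.empty isClosed_empty

lemma sus_univ : Sus (univ : Set (Ω × Y)) := by
  have h : (univ : Set (Ω × Y)) = (univ : Set Ω) ×ˢ (univ : Set Y) := by simp
  rw [h]
  exact Sus.const MeasurableSet.univ isClosed_univ

lemma Sus.compl_rect {F : Set Ω} (hF : MeasurableSet F) {C : Set Y} (hC : IsClosed C) :
    Sus ((F ×ˢ C)ᶜ) := by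
  have h : (F ×ˢ C)ᶜ = (Fᶜ ×ˢ (univ : Set Y)) ∪ ((univ : Set Ω) ×ˢ Cᶜ) := by
    ext ⟨x, y⟩
    simp only [mem_compl_iff, mem_prod, mem_union, mem_univ, and_true, true_and]
    tauto
  rw [h]
  exact (Sus.const hF.compl isClosed_univ).union
    (Sus.prod_open MeasurableSet.univ hC.isOpen_compl)

variable [MeasurableSpace Y] [BorelSpace Y] [SecondCountableTopology Y]

/-- every set in the product σ-algebra belongs to `Sus` -/
lemma Sus.of_measurableSet {H : Set (Ω × Y)} (hH : MeasurableSet H) : Sus H := by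
  let M : MeasurableSpace (Ω × Y) :=
    { MeasurableSet' := fun H => Sus H ∧ Sus Hᶜ
      measurableSet_empty := ⟨sus_empty, by rw [compl_empty]; exact sus_univ⟩
      measurableSet_compl := fun s hs => ⟨hs.2, by rw [compl_compl]; exact hs.1⟩
      measurableSet_iUnion := fun f hf =>
        ⟨Sus.iUnion fun i => (hf i).1, by
          rw [compl_iUnion]; exact Sus.iInter fun i => (hf i).2⟩ }
  have hgen : (Prod.instMeasurableSpace : MeasurableSpace (Ω × Y)) =
      MeasurableSpace.generateFrom
        (image2 (· ×ˢ ·) {F : Set Ω | MeasurableSet F} {C : Set Y | IsClosed C}) := by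
    refine (generateFrom_eq_prod MeasurableSpace.generateFrom_measurableSet ?_
      isCountablySpanning_measurableSet ?_).symm
    · rw [BorelSpace.measurable_eq (α := Y), borel_eq_generateFrom_isClosed]
    · exact ⟨fun _ => univ, fun _ => isClosed_univ, iUnion_const _⟩
  have hle : (Prod.instMeasurableSpace : MeasurableSpace (Ω × Y)) ≤ M := by
    rw [hgen]
    refine MeasurableSpace.generateFrom_le ?_
    rintro _ ⟨F, hF, C, hC, rfl⟩
    exact ⟨Sus.const hF hC, Sus.compl_rect hF hC⟩
  exact (hle H hH).1

end SusClass
section proj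
open Filter Topology
variable {Ω Y : Type*} [MeasurableSpace Ω] [MetricSpace Y]

/-- elements at even positions -/
def evl (s : List ℕ) : List ℕ :=
  (List.range ((s.length + 1) / 2)).map (fun m => s.getD (2 * m) 0)

lemma evl_pre (σ : ℕ → ℕ) (N : ℕ) :
    evl (pre σ N) = pre (fun m => σ (2 * m)) ((N + 1) / 2) := by
  unfold evl
  rw [pre_length]
  show _ = (List.range ((N + 1) / 2)).map fun m => σ (2 * m)
  refine List.map_congr_left fun m hm => ?_
  have hm' : 2 * m < N := by
    have := List.mem_range.1 hm; omega
  exact pre_getD σ hm'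

lemma evl_prefix {s t : List ℕ} (h : s <+: t) : evl s <+: evl t := by
  have hlen : s.length ≤ t.length := h.length_le
  rw [List.prefix_iff_eq_take]
  unfold evl
  rw [← List.map_take, List.take_range]
  have hmin : ((List.range ((s.length + 1) / 2)).map (fun m => s.getD (2 * m) 0)).length
      ⊓ ((t.length + 1) / 2) = (s.length + 1) / 2 := by
    simp only [List.length_map, List.length_range]
    omega
  rw [hmin]
  refine List.map_congr_left fun m hm => ?_
  have hm' : 2 * m < s.length := by
    have := List.mem_range.1 hm; omega
  exact (getD_prefix h hm').symm ▸ rfl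

variable [TopologicalSpace.SeparableSpace Y] [Nonempty Y]

/-- the `Y`-part of the refined scheme -/
def Vpart (v : List ℕ → Set Y) (s : List ℕ) : Set Y :=
  v (evl s) ∩ ⋂ (m : ℕ), ⋂ (_ : m < s.length / 2),
    Metric.closedBall (TopologicalSpace.denseSeq Y (s.getD (2 * m + 1) 0)) (1 / (m + 1))

lemma Vpart_closed {v : List ℕ → Set Y} (hv : ∀ s, IsClosed (v s)) (s : List ℕ) :
    IsClosed (Vpart v s) :=
  (hv _).inter (isClosed_biInter fun m _ => Metric.isClosed_closedBall)

lemma Vpart_anti {v : List ℕ → Set Y} (hv : Reg v) {s t : List ℕ} (h : s <+: t) :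
    Vpart v t ⊆ Vpart v s := by
  intro y hy
  refine ⟨hv (evl_prefix h) hy.1, mem_iInter₂.2 fun m hm => ?_⟩
  have hlen := h.length_le
  have h2 : 2 * m + 1 < s.length := by omega
  have h3 := mem_iInter₂.1 hy.2 m (by omega : m < t.length / 2)
  rwa [getD_prefix h h2]

/-- refining a regular rectangle scheme by closed balls does not change its Suslin set -/
lemma suslin_refine {u : List ℕ → Set Ω} {v : List ℕ → Set Y} (hu : Reg u) (hv : Reg v) :
    suslin (fun s => u (evl s) ×ˢ Vpart v s) = suslin (fun s => u s ×ˢ v s) := by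
  ext ⟨ω, y⟩
  simp only [mem_suslin]
  constructor
  · rintro ⟨σ, hσ⟩
    refine ⟨fun m => σ (2 * m), fun n => ?_⟩
    have h1 := hσ (2 * n)
    have h2 : evl (pre σ (2 * n)) = pre (fun m => σ (2 * m)) n := by
      rw [evl_pre]
      congr 1
      omega
    have ha : ω ∈ u (evl (pre σ (2 * n))) := h1.1
    have hb : y ∈ v (evl (pre σ (2 * n))) := h1.2.1
    rw [h2] at ha hb
    exact ⟨ha, hb⟩
  · rintro ⟨τ, hτ⟩
    have hdense := TopologicalSpace.denseRange_denseSeq Y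
    have hk : ∀ m : ℕ, ∃ k, dist y (TopologicalSpace.denseSeq Y k) < 1 / (m + 1) := by
      intro m
      refine Metric.mem_closure_range_iff.1 (by rw [hdense.closure_range]; trivial) _ ?_
      positivity
    choose k hk using hk
    set σ : ℕ → ℕ := fun p => if p % 2 = 0 then τ (p / 2) else k (p / 2) with hσdef
    refine ⟨σ, fun N => ?_⟩
    have hev : evl (pre σ N) = pre τ ((N + 1) / 2) := by
      rw [evl_pre]
      refine congrFun (congrArg _ ?_) _
      funext m
      simp [hσdef, Nat.mul_div_cancel_left m (by norm_num : 0 < 2)]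
    refine ⟨by rw [hev]; exact (hτ _).1, by rw [hev]; exact (hτ _).2, ?_⟩
    refine mem_iInter₂.2 fun m hm => ?_
    rw [pre_length] at hm
    have h2m : 2 * m + 1 < N := by omega
    rw [pre_getD σ h2m]
    have : σ (2 * m + 1) = k m := by
      have h1 : (2 * m + 1) % 2 = 1 := by omega
      have h2 : (2 * m + 1) / 2 = m := by omega
      simp [hσdef, h1, h2]
    rw [this]
    exact Metric.mem_closedBall.2 (hk m).le

variable [CompleteSpace Y]

/-- Cantor's intersection argument -/
lemma Vpart_iInter_nonempty {v : List ℕ → Set Y} (hvc : ∀ s, IsClosed (v s)) (hv : Reg v)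
    (σ : ℕ → ℕ) (hne : ∀ N, (Vpart v (pre σ N)).Nonempty) :
    (⋂ N, Vpart v (pre σ N)).Nonempty := by
  choose y hy using hne
  have hanti : ∀ {a b : ℕ}, a ≤ b → Vpart v (pre σ b) ⊆ Vpart v (pre σ a) :=
    fun {a b} h => Vpart_anti hv (pre_prefix σ h)
  have hball : ∀ m N, 2 * m + 2 ≤ N →
      y N ∈ Metric.closedBall
        (TopologicalSpace.denseSeq Y ((pre σ (2 * m + 2)).getD (2 * m + 1) 0)) (1 / (m + 1)) := by
    intro m N hN
    have h1 : y N ∈ Vpart v (pre σ (2 * m + 2)) := hanti hN (hy N)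
    exact mem_iInter₂.1 h1.2 m (by rw [pre_length]; omega)
  have hcauchy : CauchySeq y := by
    rw [Metric.cauchySeq_iff']
    intro ε hε
    obtain ⟨m, hm⟩ := exists_nat_gt (2 / ε)
    have hmpos : (0 : ℝ) < m + 1 := by positivity
    have hεm : 2 / (m + 1) < ε := by
      rw [div_lt_iff₀ hmpos]
      have h2 : 2 / ε < m + 1 := by linarith
      calc (2 : ℝ) = (2 / ε) * ε := by field_simp
        _ < (m + 1) * ε := by
            exact mul_lt_mul_of_pos_right h2 hε
        _ = ε * (m + 1) := by ring
    refine ⟨2 * m + 2, fun n hn => ?_⟩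
    set c := TopologicalSpace.denseSeq Y ((pre σ (2 * m + 2)).getD (2 * m + 1) 0)
    have h1 := hball m n hn
    have h2 := hball m (2 * m + 2) le_rfl
    calc dist (y n) (y (2 * m + 2)) ≤ dist (y n) c + dist (y (2 * m + 2)) c :=
          dist_triangle_right _ _ _
      _ ≤ 1 / (m + 1) + 1 / (m + 1) :=
          add_le_add (Metric.mem_closedBall.1 h1) (Metric.mem_closedBall.1 h2)
      _ = 2 / (m + 1) := by ring
      _ < ε := hεm
  obtain ⟨z, hz⟩ := cauchySeq_tendsto_of_complete hcauchy
  refine ⟨z, mem_iInter.2 fun N => ?_⟩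
  refine (Vpart_closed hvc _).mem_of_tendsto hz (eventually_atTop.2 ⟨N, fun n hn => ?_⟩)
  exact hanti hn (hy n)

/-- the projection of a `Sus` set is a Suslin set over the measurable sets of `Ω` -/
lemma proj_sus {H : Set (Ω × Y)} (hH : Sus H) :
    ∃ w : List ℕ → Set Ω, (∀ s, MeasurableSet (w s)) ∧
      {ω : Ω | ∃ y : Y, (ω, y) ∈ H} = suslin w := by
  classical
  obtain ⟨u, v, hu, hv, hru, hrv, rfl⟩ := hH
  refine ⟨fun s => if (Vpart v s).Nonempty then u (evl s) else ∅, fun s => ?_, ?_⟩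
  · by_cases h : (Vpart v s).Nonempty
    · simpa [h] using hu (evl s)
    · simp [h]
  ext ω
  simp only [mem_setOf_eq, mem_suslin]
  constructor
  · rintro ⟨y, hy⟩
    have hy' : (ω, y) ∈ suslin (fun s => u s ×ˢ v s) := mem_suslin.2 hy
    rw [← suslin_refine hru hrv] at hy'
    obtain ⟨σ, hσ⟩ := mem_suslin.1 hy'
    refine ⟨σ, fun n => ?_⟩
    rw [if_pos ⟨y, (hσ n).2⟩]
    exact (hσ n).1
  · rintro ⟨σ, hσ⟩
    have hne : ∀ N, (Vpart v (pre σ N)).Nonempty := by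
      intro N
      by_contra h
      have := hσ N
      rw [if_neg h] at this
      exact this
    obtain ⟨y, hy⟩ := Vpart_iInter_nonempty hv hrv σ hne
    refine ⟨y, ?_⟩
    have hgoal : (ω, y) ∈ suslin (fun s => u (evl s) ×ˢ Vpart v s) := by
      refine mem_suslin.2 ⟨σ, fun N => ?_⟩
      have h1 := hσ N
      rw [if_pos (hne N)] at h1
      exact ⟨h1, mem_iInter.1 hy N⟩
    rw [suslin_refine hru hrv] at hgoal
    exact mem_suslin.1 hgoal

end proj

end MP

open MeasureTheory

/-- Measurable projection theorem. -/
theorem measurable_projection {Ω Y : Type*} [MeasurableSpace Ω]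
    [MetricSpace Y] [CompleteSpace Y] [SecondCountableTopology Y]
    [MeasurableSpace Y] [BorelSpace Y]
    {μ : Measure Ω} [IsFiniteMeasure μ] (hμ : μ.IsComplete)
    (H : Set (Ω × Y)) (hH : MeasurableSet H) :
    MeasurableSet {ω : Ω | ∃ y : Y, (ω, y) ∈ H} := by
  cases isEmpty_or_nonempty Y with
  | inl h =>
    have he : {ω : Ω | ∃ y : Y, (ω, y) ∈ H} = ∅ := by
      ext ω
      simp [IsEmpty.exists_iff]
    rw [he]
    exact MeasurableSet.empty
  | inr h =>
    obtain ⟨w, hw, heq⟩ := MP.proj_sus (MP.Sus.of_measurableSet hH)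
    rw [heq]
    exact MP.measurableSet_suslin hμ hw
end
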